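/- arXiv:2601.16719 — 6 statements merged into one kernel-verified Lean document; each statement's English description precedes it below -/
import Mathlib

section
/- If the initial state of the coupled adoption-opinion system lies in [0,1]^{7n} and satisfies the normalization s(0) + a^{[1]}(0) + a^{[2]}(0) + d^{[1]}(0) + d^{[2]}(0) = 1 (entrywise), then for all times t ≥ 0 the state remains in [0,1]^{7n} and the normalization s(t) + Σ_k (a^{[k]}(t) + d^{[k]}(t)) = 1 holds. -/
lemma conv_bound' {n : ℕ} (W : Matrix (Fin n) (Fin n) ℝ) (v : Fin n → ℝ)
    (hW : ∀ i j, 0 ≤ W i j) (hWrow : ∀ i, ∑ j, W i j = 1)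
    (hv : ∀ j, v j ∈ Set.Icc (0:ℝ) 1) (i : Fin n) :
    (∑ j, W i j * v j) ∈ Set.Icc (0:ℝ) 1 := by
  constructor
  · exact Finset.sum_nonneg fun j _ => mul_nonneg (hW i j) (hv j).1
  · calc ∑ j, W i j * v j ≤ ∑ j, W i j :=
        Finset.sum_le_sum fun j _ => mul_le_of_le_one_right (hW i j) (hv j).2
      _ = 1 := hWrow i
/-- Proposition 1: invariance of `[0,1]^{7n}` and of the normalization
`s(t) + Σ_k (a^{[k]}(t) + d^{[k]}(t)) = 1` under the coupled adoption-opinion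
dynamics. -/
theorem stmt0 {n : ℕ} (W Wt : Matrix (Fin n) (Fin n) ℝ)
    (β δ γ lam ξ : Fin 2 → Fin n → ℝ)
    (s : ℕ → Fin n → ℝ) (a d x : Fin 2 → ℕ → Fin n → ℝ)
    (hW : ∀ i j, 0 ≤ W i j) (hWrow : ∀ i, ∑ j, W i j = 1)
    (hWt : ∀ i j, 0 ≤ Wt i j) (hWtrow : ∀ i, ∑ j, Wt i j = 1)
    (hβnn : ∀ k i, 0 ≤ β k i)
    (hβ : ∀ i, 0 < β 0 i + β 1 i ∧ β 0 i + β 1 i < 1)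
    (hδ : ∀ k i, 0 ≤ δ k i ∧ δ k i ≤ 1)
    (hγ : ∀ k i, 0 < γ k i ∧ γ k i < 1)
    (hlam : ∀ k i, 0 ≤ lam k i) (hξ : ∀ k i, 0 ≤ ξ k i)
    (hlx : ∀ k i, lam k i + ξ k i < 1)
    (hs : ∀ t i, s (t + 1) i =
      s t i - s t i * ∑ k, β k i * x k t i * ∑ j, W i j * a k t j)
    (ha : ∀ (k : Fin 2) (t : ℕ) (i : Fin n), a k (t + 1) i =
      a k t i + β k i * x k t i * s t i * (∑ j, W i j * a k t j)
        - δ k i * a k t i + γ k i * x k t i * d (1 - k) t i)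
    (hd : ∀ (k : Fin 2) (t : ℕ) (i : Fin n), d k (t + 1) i =
      d k t i - γ (1 - k) i * x (1 - k) t i * d k t i + δ k i * a k t i)
    (hx : ∀ (k : Fin 2) (t : ℕ) (i : Fin n), x k (t + 1) i =
      (1 - lam k i - ξ k i) * x k 0 i + lam k i * ∑ j, Wt i j * x k t j
        + ξ k i * ∑ j, W i j * a k t j)
    (h0 : (∀ i, s 0 i ∈ Set.Icc (0 : ℝ) 1) ∧
      (∀ k i, a k 0 i ∈ Set.Icc (0 : ℝ) 1 ∧ d k 0 i ∈ Set.Icc (0 : ℝ) 1 ∧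
        x k 0 i ∈ Set.Icc (0 : ℝ) 1))
    (hnorm : ∀ i, s 0 i + ∑ k, (a k 0 i + d k 0 i) = 1) :
    ∀ t : ℕ,
      ((∀ i, s t i ∈ Set.Icc (0 : ℝ) 1) ∧
        (∀ k i, a k t i ∈ Set.Icc (0 : ℝ) 1 ∧ d k t i ∈ Set.Icc (0 : ℝ) 1 ∧
          x k t i ∈ Set.Icc (0 : ℝ) 1)) ∧
      (∀ i, s t i + ∑ k, (a k t i + d k t i) = 1) := by
  intro t
  induction t with
  | zero => exact ⟨h0, hnorm⟩
  | succ t ih =>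
    obtain ⟨⟨ihs, ihadx⟩, ihnorm⟩ := ih
    -- convex combination bounds
    have hP : ∀ (k : Fin 2) i, (∑ j, W i j * a k t j) ∈ Set.Icc (0:ℝ) 1 :=
      fun k i => conv_bound' W _ hW hWrow (fun j => (ihadx k j).1) i
    have hM : ∀ (k : Fin 2) i, (∑ j, Wt i j * x k t j) ∈ Set.Icc (0:ℝ) 1 :=
      fun k i => conv_bound' Wt _ hWt hWtrow (fun j => (ihadx k j).2.2) i
    have hsum : ∀ i, s t i + a 0 t i + d 0 t i + a 1 t i + d 1 t i = 1 := by
      intro i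
      have := ihnorm i
      simp [Fin.sum_univ_two] at this
      linarith
    have e0 : (1 : Fin 2) - 0 = 1 := rfl
    have e1 : (1 : Fin 2) - 1 = 0 := rfl
    -- s bounds
    have hsb : ∀ i, s (t+1) i ∈ Set.Icc (0:ℝ) 1 := by
      intro i
      rw [hs]
      have hQ : (0:ℝ) ≤ ∑ k, β k i * x k t i * ∑ j, W i j * a k t j ∧
          (∑ k, β k i * x k t i * ∑ j, W i j * a k t j) ≤ 1 := by
        rw [Fin.sum_univ_two]
        constructor
        · have := mul_nonneg (mul_nonneg (hβnn 0 i) (ihadx 0 i).2.2.1) (hP 0 i).1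
          have := mul_nonneg (mul_nonneg (hβnn 1 i) (ihadx 1 i).2.2.1) (hP 1 i).1
          linarith
        · have h1 : β 0 i * x 0 t i * (∑ j, W i j * a 0 t j) ≤ β 0 i := by
            calc β 0 i * x 0 t i * (∑ j, W i j * a 0 t j) ≤ β 0 i * x 0 t i :=
              mul_le_of_le_one_right (mul_nonneg (hβnn 0 i) (ihadx 0 i).2.2.1) (hP 0 i).2
            _ ≤ β 0 i := mul_le_of_le_one_right (hβnn 0 i) (ihadx 0 i).2.2.2
          have h2 : β 1 i * x 1 t i * (∑ j, W i j * a 1 t j) ≤ β 1 i := by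
            calc β 1 i * x 1 t i * (∑ j, W i j * a 1 t j) ≤ β 1 i * x 1 t i :=
              mul_le_of_le_one_right (mul_nonneg (hβnn 1 i) (ihadx 1 i).2.2.1) (hP 1 i).2
            _ ≤ β 1 i := mul_le_of_le_one_right (hβnn 1 i) (ihadx 1 i).2.2.2
          have := (hβ i).2
          linarith
      have hsi := ihs i
      constructor
      · nlinarith [hsi.1, hsi.2, hQ.1, hQ.2]
      · nlinarith [hsi.1, hsi.2, hQ.1, hQ.2]
    -- β k i ≤ 1
    have hβle : ∀ (k : Fin 2) i, β k i ≤ 1 := by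
      intro k i
      have h1 := (hβ i).2
      have h2 := hβnn 0 i
      have h3 := hβnn 1 i
      fin_cases k <;> simp <;> linarith
    -- a, d bounds
    have hab : ∀ (k : Fin 2) i, a k (t+1) i ∈ Set.Icc (0:ℝ) 1 := by
      intro k i
      rw [ha]
      have hβxsP : 0 ≤ β k i * x k t i * s t i * (∑ j, W i j * a k t j) ∧
          β k i * x k t i * s t i * (∑ j, W i j * a k t j) ≤ s t i := by
        constructor
        · exact mul_nonneg (mul_nonneg (mul_nonneg (hβnn k i) (ihadx k i).2.2.1)
            (ihs i).1) (hP k i).1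
        · have hbx : β k i * x k t i ≤ 1 :=
            mul_le_one₀ (hβle k i) (ihadx k i).2.2.1 (ihadx k i).2.2.2
          calc β k i * x k t i * s t i * (∑ j, W i j * a k t j)
              ≤ β k i * x k t i * s t i :=
                mul_le_of_le_one_right (mul_nonneg (mul_nonneg (hβnn k i)
                  (ihadx k i).2.2.1) (ihs i).1) (hP k i).2
            _ ≤ s t i := mul_le_of_le_one_left (ihs i).1 hbx
      have hγxd : 0 ≤ γ k i * x k t i * d (1-k) t i ∧
          γ k i * x k t i * d (1-k) t i ≤ d (1-k) t i := by
        constructor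
        · exact mul_nonneg (mul_nonneg (le_of_lt (hγ k i).1) (ihadx k i).2.2.1)
            (ihadx (1-k) i).2.1.1
        · have hgx : γ k i * x k t i ≤ 1 :=
            mul_le_one₀ (le_of_lt (hγ k i).2) (ihadx k i).2.2.1 (ihadx k i).2.2.2
          exact mul_le_of_le_one_left (ihadx (1-k) i).2.1.1 hgx
      have hδa : 0 ≤ δ k i * a k t i ∧ δ k i * a k t i ≤ a k t i := by
        constructor
        · exact mul_nonneg (hδ k i).1 (ihadx k i).1.1
        · exact mul_le_of_le_one_left (ihadx k i).1.1 (hδ k i).2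
      have hsumi := hsum i
      have ha0 := (ihadx 0 i).1.1
      have ha1 := (ihadx 1 i).1.1
      have hd0 := (ihadx 0 i).2.1.1
      have hd1 := (ihadx 1 i).2.1.1
      have hsi := (ihs i).1
      have h3 : s t i + a k t i + d (1-k) t i ≤ 1 := by
        match k with
        | 0 => rw [e0]; linarith
        | 1 => rw [e1]; linarith
      rw [Set.mem_Icc]
      constructor
      · linarith [hβxsP.1, hγxd.1, hδa.2]
      · linarith [hβxsP.2, hγxd.2, hδa.1, hδa.2]
    have hdb : ∀ (k : Fin 2) i, d k (t+1) i ∈ Set.Icc (0:ℝ) 1 := by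
      intro k i
      rw [hd]
      have hγxd : 0 ≤ γ (1-k) i * x (1-k) t i * d k t i ∧
          γ (1-k) i * x (1-k) t i * d k t i ≤ d k t i := by
        constructor
        · exact mul_nonneg (mul_nonneg (le_of_lt (hγ (1-k) i).1) (ihadx (1-k) i).2.2.1)
            (ihadx k i).2.1.1
        · have hgx : γ (1-k) i * x (1-k) t i ≤ 1 :=
            mul_le_one₀ (le_of_lt (hγ (1-k) i).2) (ihadx (1-k) i).2.2.1 (ihadx (1-k) i).2.2.2
          exact mul_le_of_le_one_left (ihadx k i).2.1.1 hgx
      have hδa : 0 ≤ δ k i * a k t i ∧ δ k i * a k t i ≤ a k t i :=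
        ⟨mul_nonneg (hδ k i).1 (ihadx k i).1.1,
          mul_le_of_le_one_left (ihadx k i).1.1 (hδ k i).2⟩
      have hsumi := hsum i
      have ha0 := (ihadx 0 i).1.1
      have ha1 := (ihadx 1 i).1.1
      have hd0 := (ihadx 0 i).2.1.1
      have hd1 := (ihadx 1 i).2.1.1
      have hsi := (ihs i).1
      have h3 : a k t i + d k t i ≤ 1 := by
        match k with
        | 0 => linarith
        | 1 => linarith
      rw [Set.mem_Icc]
      constructor
      · linarith [hγxd.2, hδa.1]
      · linarith [hγxd.1, hδa.2]
    have hxb : ∀ (k : Fin 2) i, x k (t+1) i ∈ Set.Icc (0:ℝ) 1 := by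
      intro k i
      rw [hx]
      have hc : 0 ≤ 1 - lam k i - ξ k i := by have := hlx k i; linarith
      have hx0 := (h0.2 k i).2.2
      have hMk := hM k i
      have hPk := hP k i
      have hl := hlam k i
      have hxi := hξ k i
      constructor
      · have t1 : 0 ≤ (1 - lam k i - ξ k i) * x k 0 i := mul_nonneg hc hx0.1
        have t2 : 0 ≤ lam k i * ∑ j, Wt i j * x k t j := mul_nonneg hl hMk.1
        have t3 : 0 ≤ ξ k i * ∑ j, W i j * a k t j := mul_nonneg hxi hPk.1
        linarith
      · have t1 : (1 - lam k i - ξ k i) * x k 0 i ≤ 1 - lam k i - ξ k i :=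
          mul_le_of_le_one_right hc hx0.2
        have t2 : lam k i * ∑ j, Wt i j * x k t j ≤ lam k i :=
          mul_le_of_le_one_right hl hMk.2
        have t3 : ξ k i * ∑ j, W i j * a k t j ≤ ξ k i :=
          mul_le_of_le_one_right hxi hPk.2
        linarith
    refine ⟨⟨hsb, fun k i => ⟨hab k i, hdb k i, hxb k i⟩⟩, ?_⟩
    intro i
    rw [Fin.sum_univ_two, hs, ha, ha, hd, hd, Fin.sum_univ_two]
    simp only [e0, e1]
    have := ihnorm i
    rw [Fin.sum_univ_two] at this
    linear_combination this
end

section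
/- The adoption-free equilibrium y_e = (1, 0, 0, 0, 0, x_e^{[1]}, x_e^{[2]}) of the coupled adoption-opinion dynamics is not asymptotically stable: for every ε ∈ (0,1) there is an initial condition at sup-norm distance exactly ε from y_e whose trajectory satisfies ‖y(t) − y_e‖_∞ ≥ ε for all t ≥ 0. -/
open Matrix

/-- Proposition 3: the adoption-free equilibrium is not asymptotically stable.
For every `ε ∈ (0,1)`, the initial condition `s(0) = (1−ε)·1`, `a¹(0) = ε·1`,
`a²(0) = d¹(0) = d²(0) = 0`, `x^k(0) = x_e^k` lies at sup-norm distance exactly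
`ε` from `y_e`, and the resulting trajectory satisfies
`‖y(t) − y_e‖_∞ ≥ ε` for all `t ≥ 0`. -/
theorem stmt5 {n : ℕ} (hn : 0 < n) (W Wt : Matrix (Fin n) (Fin n) ℝ)
    (β δ γ lam ξ : Fin 2 → Fin n → ℝ) (x0 : Fin 2 → Fin n → ℝ)
    (s : ℕ → Fin n → ℝ) (a d x : Fin 2 → ℕ → Fin n → ℝ) (ε : ℝ)
    (hε : ε ∈ Set.Ioo (0 : ℝ) 1)
    (hW : ∀ i j, 0 ≤ W i j) (hWrow : ∀ i, ∑ j, W i j = 1)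
    (hWt : ∀ i j, 0 ≤ Wt i j) (hWtrow : ∀ i, ∑ j, Wt i j = 1)
    (hβnn : ∀ k i, 0 ≤ β k i) (hβ : ∀ i, 0 < β 0 i + β 1 i ∧ β 0 i + β 1 i < 1)
    (hδ : ∀ k i, 0 ≤ δ k i ∧ δ k i ≤ 1) (hγ : ∀ k i, 0 < γ k i ∧ γ k i < 1)
    (hlam : ∀ k i, 0 ≤ lam k i) (hξ : ∀ k i, 0 ≤ ξ k i)
    (hlx : ∀ k i, lam k i + ξ k i < 1)
    (hunit : ∀ k : Fin 2, IsUnit (1 - Matrix.diagonal (lam k) * Wt))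
    (xe : Fin 2 → Fin n → ℝ)
    (hxe : ∀ k : Fin 2, xe k = (1 - Matrix.diagonal (lam k) * Wt)⁻¹ *ᵥ
      ((1 - Matrix.diagonal (lam k) - Matrix.diagonal (ξ k)) *ᵥ x0 k))
    (hxe01 : ∀ k i, xe k i ∈ Set.Icc (0 : ℝ) 1)
    -- dynamics
    (hs : ∀ t i, s (t + 1) i =
      s t i - s t i * ∑ k, β k i * x k t i * ∑ j, W i j * a k t j)
    (ha : ∀ (k : Fin 2) (t : ℕ) (i : Fin n), a k (t + 1) i =
      a k t i + β k i * x k t i * s t i * (∑ j, W i j * a k t j)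
        - δ k i * a k t i + γ k i * x k t i * d (1 - k) t i)
    (hd : ∀ (k : Fin 2) (t : ℕ) (i : Fin n), d k (t + 1) i =
      d k t i - γ (1 - k) i * x (1 - k) t i * d k t i + δ k i * a k t i)
    (hx : ∀ (k : Fin 2) (t : ℕ) (i : Fin n), x k (t + 1) i =
      (1 - lam k i - ξ k i) * x k 0 i + lam k i * ∑ j, Wt i j * x k t j
        + ξ k i * ∑ j, W i j * a k t j)
    -- perturbed initial condition
    (hs0 : ∀ i, s 0 i = 1 - ε)
    (ha10 : ∀ i, a 0 0 i = ε) (ha20 : ∀ i, a 1 0 i = 0)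
    (hd0 : ∀ (k : Fin 2) (i : Fin n), d k 0 i = 0)
    (hx0 : ∀ (k : Fin 2) (i : Fin n), x k 0 i = xe k i) :
    -- ‖y(0) − y_e‖_∞ = ε : every component deviation is ≤ ε and some equals ε
    ((∀ i : Fin n, |s 0 i - 1| ≤ ε ∧
        ∀ k : Fin 2, |a k 0 i - 0| ≤ ε ∧ |d k 0 i - 0| ≤ ε ∧ |x k 0 i - xe k i| ≤ ε) ∧
      ∃ i : Fin n, |s 0 i - 1| = ε) ∧
    -- the trajectory never returns ε-close to y_e
    (∀ t : ℕ, ∃ i : Fin n, |s t i - 1| ≥ ε) := by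
  obtain ⟨hε0, hε1⟩ := hε
  have key : ∀ t : ℕ, ∀ i : Fin n,
      (0 ≤ s t i ∧ s t i ≤ 1 - ε) ∧
      (∀ k : Fin 2, 0 ≤ a k t i ∧ 0 ≤ d k t i ∧ 0 ≤ x k t i ∧ x k t i ≤ 1) ∧
      s t i + a 0 t i + a 1 t i + d 0 t i + d 1 t i = 1 := by
    intro t
    induction t with
    | zero =>
      intro i
      have hx01 : ∀ k : Fin 2, 0 ≤ x k 0 i ∧ x k 0 i ≤ 1 := by
        intro k; rw [hx0]; exact ⟨(hxe01 k i).1, (hxe01 k i).2⟩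
      refine ⟨⟨by rw [hs0]; linarith, by rw [hs0]⟩, ?_, ?_⟩
      · intro k
        refine ⟨?_, by rw [hd0], (hx01 k).1, (hx01 k).2⟩
        have hk2 : k = 0 ∨ k = 1 := by omega
        rcases hk2 with rfl | rfl
        · rw [ha10]; linarith
        · rw [ha20]
      · rw [hs0, ha10, ha20, hd0, hd0]; ring
    | succ t ih =>
      have haub : ∀ (k : Fin 2) (i : Fin n), a k t i ≤ 1 := by
        intro k i
        obtain ⟨⟨hs0', _⟩, hk, hsum⟩ := ih i
        have h0 := hk 0; have h1 := hk 1
        have hk2 : k = 0 ∨ k = 1 := by omega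
        rcases hk2 with rfl | rfl <;> linarith [h0.1, h1.1, h0.2.1, h1.2.1]
      have hWa : ∀ (k : Fin 2) (i : Fin n),
          0 ≤ (∑ j, W i j * a k t j) ∧ (∑ j, W i j * a k t j) ≤ 1 := by
        intro k i
        constructor
        · exact Finset.sum_nonneg fun j _ => mul_nonneg (hW i j) ((ih j).2.1 k).1
        · calc (∑ j, W i j * a k t j) ≤ ∑ j, W i j := by
                refine Finset.sum_le_sum fun j _ => ?_
                have := mul_le_of_le_one_right (hW i j) (haub k j)
                linarith
            _ = 1 := hWrow i
      have hWx : ∀ (k : Fin 2) (i : Fin n),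
          0 ≤ (∑ j, Wt i j * x k t j) ∧ (∑ j, Wt i j * x k t j) ≤ 1 := by
        intro k i
        constructor
        · exact Finset.sum_nonneg fun j _ => mul_nonneg (hWt i j) ((ih j).2.1 k).2.2.1
        · calc (∑ j, Wt i j * x k t j) ≤ ∑ j, Wt i j := by
                refine Finset.sum_le_sum fun j _ => ?_
                have := mul_le_of_le_one_right (hWt i j) ((ih j).2.1 k).2.2.2
                linarith
            _ = 1 := hWtrow i
      intro i
      obtain ⟨⟨hsl, hsu⟩, hk, hsum⟩ := ih i
      have h0 := hk 0; have h1 := hk 1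
      have hS := hs t i
      rw [Fin.sum_univ_two] at hS
      have hA0 := hWa 0 i; have hA1 := hWa 1 i
      have hb := hβ i
      have hb0 := hβnn 0 i; have hb1 := hβnn 1 i
      have p0 : β 0 i * x 0 t i * (∑ j, W i j * a 0 t j) ≤ β 0 i := by
        have h := mul_le_one₀ h0.2.2.2 hA0.1 hA0.2
        calc β 0 i * x 0 t i * (∑ j, W i j * a 0 t j)
            = β 0 i * (x 0 t i * (∑ j, W i j * a 0 t j)) := by ring
          _ ≤ β 0 i * 1 := mul_le_mul_of_nonneg_left h hb0
          _ = β 0 i := mul_one _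
      have p1 : β 1 i * x 1 t i * (∑ j, W i j * a 1 t j) ≤ β 1 i := by
        have h := mul_le_one₀ h1.2.2.2 hA1.1 hA1.2
        calc β 1 i * x 1 t i * (∑ j, W i j * a 1 t j)
            = β 1 i * (x 1 t i * (∑ j, W i j * a 1 t j)) := by ring
          _ ≤ β 1 i * 1 := mul_le_mul_of_nonneg_left h hb1
          _ = β 1 i := mul_one _
      have q0 : 0 ≤ β 0 i * x 0 t i * (∑ j, W i j * a 0 t j) :=
        mul_nonneg (mul_nonneg hb0 h0.2.2.1) hA0.1
      have q1 : 0 ≤ β 1 i * x 1 t i * (∑ j, W i j * a 1 t j) :=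
        mul_nonneg (mul_nonneg hb1 h1.2.2.1) hA1.1
      set T := β 0 i * x 0 t i * (∑ j, W i j * a 0 t j)
        + β 1 i * x 1 t i * (∑ j, W i j * a 1 t j) with hT
      have hT1 : T ≤ 1 := by linarith [hb.2]
      have hT0 : 0 ≤ T := by linarith
      have hsTle : s t i * T ≤ s t i := by
        have := mul_le_of_le_one_right hsl hT1; linarith
      have hsT0 : 0 ≤ s t i * T := mul_nonneg hsl hT0
      have hsnew : (0 ≤ s (t+1) i ∧ s (t+1) i ≤ 1 - ε) := by
        constructor
        · rw [hS]; linarith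
        · rw [hS]; linarith
      refine ⟨hsnew, ?_, ?_⟩
      · intro k
        have hik := hk k
        have hik' := hk (1 - k)
        have hA := hWa k i
        have hX := hWx k i
        have hdl := hδ k i
        have hgl := hγ (1 - k) i
        have hglk := hγ k i
        have hlxk := hlx k i
        have hlk := hlam k i
        have hxik := hξ k i
        have hx0b := hxe01 k i
        refine ⟨?_, ?_, ?_, ?_⟩
        · rw [ha k t i]
          have t1 : 0 ≤ β k i * x k t i * s t i * (∑ j, W i j * a k t j) :=
            mul_nonneg (mul_nonneg (mul_nonneg (hβnn k i) hik.2.2.1) hsl) hA.1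
          have t2 : 0 ≤ γ k i * x k t i * d (1 - k) t i :=
            mul_nonneg (mul_nonneg (le_of_lt hglk.1) hik.2.2.1) hik'.2.1
          have t3 : δ k i * a k t i ≤ a k t i := mul_le_of_le_one_left hik.1 hdl.2
          linarith
        · rw [hd k t i]
          have t1 : γ (1 - k) i * x (1 - k) t i ≤ 1 :=
            mul_le_one₀ (le_of_lt hgl.2) hik'.2.2.1 hik'.2.2.2
          have t2 : γ (1 - k) i * x (1 - k) t i * d k t i ≤ d k t i :=
            mul_le_of_le_one_left hik.2.1 t1
          have t3 : 0 ≤ δ k i * a k t i := mul_nonneg hdl.1 hik.1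
          linarith
        · rw [hx k t i, hx0 k i]
          have h1' : 0 ≤ (1 - lam k i - ξ k i) * xe k i :=
            mul_nonneg (by linarith) hx0b.1
          have h2' : 0 ≤ lam k i * ∑ j, Wt i j * x k t j := mul_nonneg hlk hX.1
          have h3' : 0 ≤ ξ k i * ∑ j, W i j * a k t j := mul_nonneg hxik hA.1
          linarith
        · rw [hx k t i, hx0 k i]
          have h1' : (1 - lam k i - ξ k i) * xe k i ≤ 1 - lam k i - ξ k i :=
            mul_le_of_le_one_right (by linarith) hx0b.2
          have h2' : lam k i * ∑ j, Wt i j * x k t j ≤ lam k i :=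
            mul_le_of_le_one_right hlk hX.2
          have h3' : ξ k i * ∑ j, W i j * a k t j ≤ ξ k i :=
            mul_le_of_le_one_right hxik hA.2
          linarith
      · have e1 := ha 0 t i
        have e2 := ha 1 t i
        have e3 := hd 0 t i
        have e4 := hd 1 t i
        have k1 : (1 : Fin 2) - 0 = 1 := by decide
        have k2 : (1 : Fin 2) - 1 = 0 := by decide
        rw [k1] at e1 e3
        rw [k2] at e2 e4
        rw [hS, e1, e2, e3, e4, hT]
        linear_combination hsum
  refine ⟨⟨?_, ?_⟩, ?_⟩
  · intro i
    refine ⟨by rw [hs0, abs_of_nonpos (by linarith)]; linarith, ?_⟩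
    intro k
    refine ⟨?_, by rw [hd0]; simp [le_of_lt hε0], by rw [hx0]; simp [le_of_lt hε0]⟩
    have hk2 : k = 0 ∨ k = 1 := by omega
    rcases hk2 with rfl | rfl
    · rw [ha10]; simp [abs_of_pos hε0]
    · rw [ha20]; simp [le_of_lt hε0]
  · exact ⟨⟨0, hn⟩, by rw [hs0, abs_of_nonpos (by linarith)]; ring⟩
  · intro t
    refine ⟨⟨0, hn⟩, ?_⟩
    obtain ⟨⟨_, hub⟩, _, _⟩ := key t ⟨0, hn⟩
    rw [abs_of_nonpos (by linarith)]
    linarith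
end

section
/- Define the map T: [0,1]^n → ℝ^n by T_i(a) = 1 − (δ_i^{[1]}/δ_i^{[2]}) a_i − δ_i^{[1]} a_i (1/(γ_i^{[1]} x_i^{[1]}(a)) + 1/(γ_i^{[2]} x_i^{[2]}(a))), where x^{[k]}(a) = (I − Λ^{[k]} W̃)^{-1}((I − Λ^{[k]} − Ξ^{[k]}) x^{[k]}(0) + Ξ^{[k]} W a^{[k]}(a)) with a^{[1]}(a) = a and a_i^{[2]}(a) = (δ_i^{[1]}/δ_i^{[2]}) a_i. Then T admits a fixed point in [u, 1] ⊂ [0,1]^n where u_i = max{0, 1 − δ_i^{[1]}/δ_i^{[2]} − φ̲_i} and φ̲_i = δ_i^{[1]}(1/(γ_i^{[1]} x_{e,i}^{[1]}) + 1/(γ_i^{[2]} x_{e,i}^{[2]})). -/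
open Matrix

/-- Existence of a fixed point of the adoption fixed-point map `T` in the box
`[u, 1] ⊆ [0,1]^n`, where `u_i = max{0, 1 − δ_i^{[1]}/δ_i^{[2]} − φ̲_i}` and
`φ̲_i = δ_i^{[1]}(1/(γ_i^{[1]} x_{e,i}^{[1]}) + 1/(γ_i^{[2]} x_{e,i}^{[2]}))`. -/
theorem stmt9 {n : ℕ} (W Wt : Matrix (Fin n) (Fin n) ℝ)
    (δ γ lam ξ : Fin 2 → Fin n → ℝ) (x0 : Fin 2 → Fin n → ℝ)
    (hW : ∀ i j, 0 ≤ W i j) (hWrow : ∀ i, ∑ j, W i j = 1)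
    (hWt : ∀ i j, 0 ≤ Wt i j) (hWtrow : ∀ i, ∑ j, Wt i j = 1)
    (hδ : ∀ k i, 0 < δ k i ∧ δ k i ≤ 1) (hγ : ∀ k i, 0 < γ k i ∧ γ k i < 1)
    (hlam : ∀ k i, 0 ≤ lam k i) (hξ : ∀ k i, 0 < ξ k i)
    (hlx : ∀ k i, lam k i + ξ k i < 1)
    (hunit : ∀ k : Fin 2, IsUnit (1 - Matrix.diagonal (lam k) * Wt))
    (hMnn : ∀ (k : Fin 2) (i j : Fin n), 0 ≤ (1 - Matrix.diagonal (lam k) * Wt)⁻¹ i j)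
    -- the adoption-free opinions x_e, entrywise positive (Assumption 1)
    (xe : Fin 2 → Fin n → ℝ)
    (hxe : ∀ k : Fin 2, xe k = (1 - Matrix.diagonal (lam k) * Wt)⁻¹ *ᵥ
      ((1 - Matrix.diagonal (lam k) - Matrix.diagonal (ξ k)) *ᵥ x0 k))
    (hxepos : ∀ k i, 0 < xe k i)
    -- the adoption vectors as functions of a = a^{[1]}
    (avec : Fin 2 → (Fin n → ℝ) → (Fin n → ℝ))
    (havec1 : ∀ a, avec 0 a = a)
    (havec2 : ∀ a i, avec 1 a i = (δ 0 i / δ 1 i) * a i)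
    -- the equilibrium opinion map x^{[k]}(a)
    (xfun : Fin 2 → (Fin n → ℝ) → (Fin n → ℝ))
    (hxfun : ∀ (k : Fin 2) (a : Fin n → ℝ), xfun k a =
      (1 - Matrix.diagonal (lam k) * Wt)⁻¹ *ᵥ
        ((1 - Matrix.diagonal (lam k) - Matrix.diagonal (ξ k)) *ᵥ x0 k
          + Matrix.diagonal (ξ k) *ᵥ (W *ᵥ avec k a)))
    -- the fixed-point map T
    (T : (Fin n → ℝ) → (Fin n → ℝ))
    (hT : ∀ (a : Fin n → ℝ) (i : Fin n), T a i =
      1 - (δ 0 i / δ 1 i) * a i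
        - δ 0 i * a i * (1 / (γ 0 i * xfun 0 a i) + 1 / (γ 1 i * xfun 1 a i)))
    -- the lower corner u of the invariant box
    (u : Fin n → ℝ)
    (hu : ∀ i, u i = max 0 (1 - δ 0 i / δ 1 i
      - δ 0 i * (1 / (γ 0 i * xe 0 i) + 1 / (γ 1 i * xe 1 i)))) :
    ∃ a : Fin n → ℝ, (∀ i, u i ≤ a i ∧ a i ≤ 1) ∧ T a = a := by
  haveI : Fact ((0:ℝ) ≤ 1) := ⟨zero_le_one⟩
  -- entrywise formula for xfun
  have hxfun' : ∀ (k : Fin 2) (a : Fin n → ℝ) (i : Fin n),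
      xfun k a i = xe k i + ∑ j, (1 - Matrix.diagonal (lam k) * Wt)⁻¹ i j *
        (ξ k j * ∑ l, W j l * avec k a l) := by
    intro k a i
    rw [hxfun, hxe, Matrix.mulVec_add]
    simp only [Pi.add_apply]
    congr 1
    simp only [Matrix.mulVec, dotProduct, Matrix.mulVec_diagonal]
    refine Finset.sum_congr rfl fun j _ => ?_
    congr 1
    rw [Finset.sum_eq_single j (fun b _ hb => by
      simp [Matrix.diagonal_apply_ne _ (Ne.symm hb)]) (by simp)]
    simp [Matrix.diagonal_apply_eq]
  have hc : ∀ i, 0 ≤ δ 0 i / δ 1 i := fun i => le_of_lt (div_pos (hδ 0 i).1 (hδ 1 i).1)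
  have hav0 : ∀ (k : Fin 2) (a : Fin n → ℝ), (∀ i, 0 ≤ a i) → ∀ i, 0 ≤ avec k a i := by
    intro k a ha i
    fin_cases k
    · simp only [Fin.mk_zero, Fin.mk_one, havec1]; exact ha i
    · simp only [Fin.mk_zero, Fin.mk_one, havec2]; exact mul_nonneg (hc i) (ha i)
  have havm : ∀ (k : Fin 2) (a a' : Fin n → ℝ), (∀ i, a i ≤ a' i) →
      ∀ i, avec k a i ≤ avec k a' i := by
    intro k a a' h i
    fin_cases k
    · simp only [Fin.mk_zero, Fin.mk_one, havec1]; exact h i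
    · simp only [Fin.mk_zero, Fin.mk_one, havec2]; exact mul_le_mul_of_nonneg_left (h i) (hc i)
  have hxmono : ∀ (k : Fin 2) (a a' : Fin n → ℝ), (∀ i, a i ≤ a' i) →
      ∀ i, xfun k a i ≤ xfun k a' i := by
    intro k a a' h i
    rw [hxfun', hxfun']
    refine add_le_add (le_refl _) (Finset.sum_le_sum fun j _ => ?_)
    refine mul_le_mul_of_nonneg_left ?_ (hMnn k i j)
    refine mul_le_mul_of_nonneg_left ?_ (hξ k j).le
    exact Finset.sum_le_sum fun l _ => mul_le_mul_of_nonneg_left (havm k a a' h l) (hW j l)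
  have hxlb : ∀ (k : Fin 2) (a : Fin n → ℝ), (∀ i, 0 ≤ a i) → ∀ i, xe k i ≤ xfun k a i := by
    intro k a ha i
    rw [hxfun']
    have h0 : 0 ≤ ∑ j, (1 - Matrix.diagonal (lam k) * Wt)⁻¹ i j *
        (ξ k j * ∑ l, W j l * avec k a l) :=
      Finset.sum_nonneg fun j _ => mul_nonneg (hMnn k i j) (mul_nonneg (hξ k j).le
        (Finset.sum_nonneg fun l _ => mul_nonneg (hW j l) (hav0 k a ha l)))
    linarith
  have hxpos : ∀ (k : Fin 2) (a : Fin n → ℝ), (∀ i, 0 ≤ a i) → ∀ i, 0 < xfun k a i :=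
    fun k a ha i => lt_of_lt_of_le (hxepos k i) (hxlb k a ha i)
  -- the monotone reformulated map g
  set g : (Fin n → ℝ) → Fin n → ℝ := fun a i =>
    1 / (1 + δ 0 i / δ 1 i + δ 0 i *
      (1 / (γ 0 i * xfun 0 a i) + 1 / (γ 1 i * xfun 1 a i))) with hg
  have hφpos : ∀ (a : Fin n → ℝ), (∀ i, 0 ≤ a i) → ∀ i,
      0 < 1 / (γ 0 i * xfun 0 a i) + 1 / (γ 1 i * xfun 1 a i) := by
    intro a ha i
    have h1 : 0 < γ 0 i * xfun 0 a i := mul_pos (hγ 0 i).1 (hxpos 0 a ha i)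
    have h2 : 0 < γ 1 i * xfun 1 a i := mul_pos (hγ 1 i).1 (hxpos 1 a ha i)
    positivity
  have hdpos : ∀ (a : Fin n → ℝ), (∀ i, 0 ≤ a i) → ∀ i,
      (1:ℝ) ≤ 1 + δ 0 i / δ 1 i + δ 0 i *
        (1 / (γ 0 i * xfun 0 a i) + 1 / (γ 1 i * xfun 1 a i)) := by
    intro a ha i
    have := hφpos a ha i
    have hδ0 := (hδ 0 i).1
    nlinarith [hc i]
  have hg01 : ∀ (a : Fin n → ℝ), (∀ i, 0 ≤ a i) → ∀ i, 0 ≤ g a i ∧ g a i ≤ 1 := by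
    intro a ha i
    have hd := hdpos a ha i
    constructor
    · exact div_nonneg zero_le_one (by linarith)
    · rw [hg, div_le_one (by linarith)]; exact hd
  have hgmono : ∀ (a a' : Fin n → ℝ), (∀ i, 0 ≤ a i) → (∀ i, a i ≤ a' i) →
      ∀ i, g a i ≤ g a' i := by
    intro a a' ha h i
    have ha' : ∀ i, 0 ≤ a' i := fun i => le_trans (ha i) (h i)
    refine one_div_le_one_div_of_le (by linarith [hdpos a' ha' i]) ?_
    have hx0 : γ 0 i * xfun 0 a i ≤ γ 0 i * xfun 0 a' i :=
      mul_le_mul_of_nonneg_left (hxmono 0 a a' h i) (hγ 0 i).1.le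
    have hx1 : γ 1 i * xfun 1 a i ≤ γ 1 i * xfun 1 a' i :=
      mul_le_mul_of_nonneg_left (hxmono 1 a a' h i) (hγ 1 i).1.le
    have hp0 : 0 < γ 0 i * xfun 0 a i := mul_pos (hγ 0 i).1 (hxpos 0 a ha i)
    have hp1 : 0 < γ 1 i * xfun 1 a i := mul_pos (hγ 1 i).1 (hxpos 1 a ha i)
    have e0 : 1 / (γ 0 i * xfun 0 a' i) ≤ 1 / (γ 0 i * xfun 0 a i) :=
      one_div_le_one_div_of_le hp0 hx0
    have e1 : 1 / (γ 1 i * xfun 1 a' i) ≤ 1 / (γ 1 i * xfun 1 a i) :=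
      one_div_le_one_div_of_le hp1 hx1
    have hδ0 := (hδ 0 i).1
    nlinarith
  -- Knaster–Tarski on the complete lattice [0,1]^n
  let F : (Fin n → Set.Icc (0:ℝ) 1) →o (Fin n → Set.Icc (0:ℝ) 1) :=
    { toFun := fun b i => ⟨g (fun j => (b j : ℝ)) i,
        (hg01 _ (fun j => (b j).2.1) i).1, (hg01 _ (fun j => (b j).2.1) i).2⟩,
      monotone' := by
        intro b b' hb i
        exact hgmono _ _ (fun j => (b j).2.1) (fun j => hb j) i }
  set a : Fin n → ℝ := fun i => (F.lfp i : ℝ) with haa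
  have ha0 : ∀ i, 0 ≤ a i := fun i => (F.lfp i).2.1
  have ha1 : ∀ i, a i ≤ 1 := fun i => (F.lfp i).2.2
  have hfix : ∀ i, g a i = a i := by
    intro i
    have := congrFun F.map_lfp i
    exact congrArg Subtype.val this
  -- the product form of the fixed-point equation
  have hkey : ∀ i, a i * (1 + δ 0 i / δ 1 i + δ 0 i *
      (1 / (γ 0 i * xfun 0 a i) + 1 / (γ 1 i * xfun 1 a i))) = 1 := by
    intro i
    rw [← hfix i, hg]
    exact one_div_mul_cancel (by linarith [hdpos a ha0 i])
  have hTa : T a = a := by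
    funext i
    rw [hT]
    linear_combination -hkey i
  refine ⟨a, fun i => ⟨?_, ha1 i⟩, hTa⟩
  rw [hu]
  refine max_le (ha0 i) ?_
  -- lower bound via the fixed point relation and xe ≤ xfun
  have hφle0 : 1 / (γ 0 i * xfun 0 a i) ≤ 1 / (γ 0 i * xe 0 i) :=
    one_div_le_one_div_of_le (mul_pos (hγ 0 i).1 (hxepos 0 i))
      (mul_le_mul_of_nonneg_left (hxlb 0 a ha0 i) (hγ 0 i).1.le)
  have hφle1 : 1 / (γ 1 i * xfun 1 a i) ≤ 1 / (γ 1 i * xe 1 i) :=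
    one_div_le_one_div_of_le (mul_pos (hγ 1 i).1 (hxepos 1 i))
      (mul_le_mul_of_nonneg_left (hxlb 1 a ha0 i) (hγ 1 i).1.le)
  have heq : a i = 1 - δ 0 i / δ 1 i * a i - δ 0 i * a i *
      (1 / (γ 0 i * xfun 0 a i) + 1 / (γ 1 i * xfun 1 a i)) := by
    have := congrFun hTa i
    rw [hT] at this
    linarith
  have hφp := hφpos a ha0 i
  have hδ0 := (hδ 0 i).1
  have hpe0 : 0 < 1 / (γ 0 i * xe 0 i) := one_div_pos.mpr (mul_pos (hγ 0 i).1 (hxepos 0 i))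
  have hpe1 : 0 < 1 / (γ 1 i * xe 1 i) := one_div_pos.mpr (mul_pos (hγ 1 i).1 (hxepos 1 i))
  nlinarith [hc i, mul_le_mul_of_nonneg_left (ha1 i) (hc i),
    mul_nonneg hδ0.le (ha0 i), hφle0, hφle1,
    mul_le_mul_of_nonneg_left (add_le_add hφle0 hφle1) (mul_nonneg hδ0.le (ha0 i)),
    mul_le_mul_of_nonneg_right (mul_le_mul_of_nonneg_left (ha1 i) hδ0.le)
      (add_pos hpe0 hpe1).le]
end

section
/- Suppose T: [u, 1] → [u, 1] is a continuous monotone map (a ≥ b, a ≠ b implies T(a) > T(b)) satisfying the strict sub-homogeneity property T_i(αa) < α T_i(a) + (1 − α)(1 − φ_i(a) a_i) with 1 − φ_i(a) a_i > 0 for all α > 1 and a in the domain. Then T has at most one fixed point in [u, 1]. -/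
/-- Abstract uniqueness lemma: a continuous monotone map `T : [u,1] → [u,1]`
satisfying the strict sub-homogeneity property
`T_i(αa) < α T_i(a) + (1 − α)(1 − φ_i(a) a_i)` with `1 − φ_i(a) a_i > 0`
for all `α > 1` has at most one fixed point in `[u,1]`. -/
theorem stmt13 {n : ℕ} (u : Fin n → ℝ) (hu : ∀ i, u i ∈ Set.Icc (0 : ℝ) 1)
    (T : (Fin n → ℝ) → (Fin n → ℝ)) (φ : (Fin n → ℝ) → Fin n → ℝ)
    (hcont : ContinuousOn T (Set.Icc u 1))
    (hmaps : Set.MapsTo T (Set.Icc u 1) (Set.Icc u 1))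
    -- monotonicity: a ≥ b, a ≠ b implies T(a) > T(b) entrywise
    (hmono : ∀ a b : Fin n → ℝ, a ∈ Set.Icc u 1 → b ∈ Set.Icc u 1 →
      b ≤ a → b ≠ a → ∀ i, T b i < T a i)
    (hφ : ∀ a : Fin n → ℝ, a ∈ Set.Icc u 1 → ∀ i, 0 < 1 - φ a i * a i)
    -- strict sub-homogeneity
    (hsub : ∀ (α : ℝ), 1 < α → ∀ a : Fin n → ℝ, a ∈ Set.Icc u 1 → ∀ i,
      T (α • a) i < α * T a i + (1 - α) * (1 - φ a i * a i)) :
    ∀ a b : Fin n → ℝ, a ∈ Set.Icc u 1 → b ∈ Set.Icc u 1 →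
      T a = a → T b = b → a = b := by
  classical
  -- non-strict monotonicity
  have hmono' : ∀ p q : Fin n → ℝ, p ∈ Set.Icc u 1 → q ∈ Set.Icc u 1 →
      q ≤ p → T q ≤ T p := by
    intro p q hp hq hle
    rcases eq_or_ne q p with h | h
    · rw [h]
    · exact fun i => (hmono p q hp hq hle h i).le
  -- main lemma: comparable fixed points are equal
  have comp : ∀ p q : Fin n → ℝ, p ∈ Set.Icc u 1 → q ∈ Set.Icc u 1 →
      T p = p → T q = q → q ≤ p → q = p := by
    intro p q hp hq hfp hfq hle
    by_contra hne
    have hstrict : ∀ i, q i < p i := by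
      intro i
      have h := hmono p q hp hq hle hne i
      rwa [hfp, hfq] at h
    have hnonempty : Nonempty (Fin n) := by
      rcases Function.ne_iff.mp hne with ⟨i, _⟩; exact ⟨i⟩
    have hq0 : ∀ i, (0 : ℝ) ≤ q i := fun i => le_trans (hu i).1 (hq.1 i)
    have hp1 : ∀ i, p i ≤ 1 := fun i => hp.2 i
    have hq1 : ∀ i, q i < 1 := fun i => lt_of_lt_of_le (hstrict i) (hp1 i)
    -- m : strict upper bound of q below 1
    set m : ℝ := Finset.univ.sup' (Finset.univ_nonempty) q with hm_def
    have hm_le : ∀ i, q i ≤ m := fun i => Finset.le_sup' q (Finset.mem_univ i)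
    have hm1 : m < 1 := (Finset.sup'_lt_iff _).mpr (fun i _ => hq1 i)
    -- positivity of q
    have hqpos : ∀ i, 0 < q i := by
      by_contra hcon
      push_neg at hcon
      obtain ⟨i0, hi0⟩ := hcon
      have hqi0 : q i0 = 0 := le_antisymm hi0 (hq0 i0)
      set m' : ℝ := max m (1/2) with hm'_def
      have hm'0 : (0 : ℝ) < m' := lt_of_lt_of_le (by norm_num) (le_max_right _ _)
      have hm'1 : m' < 1 := max_lt hm1 (by norm_num)
      have hαgt : 1 < 1 / m' := (one_lt_div hm'0).mpr hm'1
      have hmem : (1 / m') • q ∈ Set.Icc u 1 := by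
        refine Set.mem_Icc.mpr ⟨Pi.le_def.mpr fun j => ?_, Pi.le_def.mpr fun j => ?_⟩
        · calc u j ≤ q j := hq.1 j
            _ ≤ (1 / m') * q j := le_mul_of_one_le_left (hq0 j) hαgt.le
        · show (1 / m') * q j ≤ 1
          rw [div_mul_eq_mul_div, one_mul, div_le_one hm'0]
          exact le_trans (hm_le j) (le_max_left _ _)
      have h1 : (0 : ℝ) ≤ T ((1 / m') • q) i0 := by
        have hch := hmono' _ q hmem hq
          (Pi.le_def.mpr fun j => le_mul_of_one_le_left (hq0 j) hαgt.le)
        have := hch i0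
        rw [hfq, hqi0] at this
        exact this
      have h2 := hsub (1 / m') hαgt q hq i0
      rw [hfq, hqi0] at h2
      nlinarith [h1, h2, hαgt]
    have hppos : ∀ i, 0 < p i := fun i => lt_trans (hqpos i) (hstrict i)
    have hm0 : (0 : ℝ) < m :=
      lt_of_lt_of_le (hqpos (Classical.arbitrary (Fin n))) (hm_le _)
    -- β₀ : minimal ratio
    set β₀ : ℝ := Finset.univ.inf' (Finset.univ_nonempty) (fun i => q i / p i) with hβ₀_def
    obtain ⟨i0, -, hi0⟩ := Finset.exists_mem_eq_inf' (Finset.univ_nonempty) (fun i => q i / p i)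
    have hβ₀le : ∀ i, β₀ ≤ q i / p i := fun i => Finset.inf'_le _ (Finset.mem_univ i)
    have hβ₀eq : β₀ = q i0 / p i0 := hi0
    have hβ₀pos : 0 < β₀ := by rw [hβ₀eq]; exact div_pos (hqpos i0) (hppos i0)
    have hβ₀lt1 : β₀ < 1 := by
      rw [hβ₀eq]; exact (div_lt_one (hppos i0)).mpr (hstrict i0)
    have hβ₀mul : ∀ i, β₀ * p i ≤ q i := fun i => (le_div_iff₀ (hppos i)).mp (hβ₀le i)
    have hβ₀i0 : β₀ * p i0 = q i0 := by
      rw [hβ₀eq]; exact div_mul_cancel₀ _ (hppos i0).ne'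
    -- the path
    set xt : ℝ → (Fin n → ℝ) := fun β i => max (β * p i) (q i) with hxt_def
    have hxt_ge_q : ∀ β, q ≤ xt β := fun β => Pi.le_def.mpr fun i => le_max_right _ _
    have hxt_mem : ∀ β, 0 ≤ β → β ≤ 1 → xt β ∈ Set.Icc u 1 := by
      intro β h0 h1
      refine Set.mem_Icc.mpr ⟨Pi.le_def.mpr fun j => ?_, Pi.le_def.mpr fun j => ?_⟩
      · exact le_trans (hq.1 j) (le_max_right _ _)
      · refine max_le ?_ (hq1 j).le
        calc β * p j ≤ 1 * 1 := by
              apply mul_le_mul h1 (hp1 j) (hppos j).le zero_le_one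
          _ = 1 := one_mul 1
    -- the invariant
    set P : ℝ → Prop := fun β => ∀ i, xt β i ≤ T (xt β) i with hP_def
    -- propagation step
    have prop : ∀ β' β'' : ℝ, β₀ < β' → β' < β'' → β'' ≤ 1 → β'' * m ≤ β' →
        P β'' → P β' := by
      intro β' β'' h1 h2 h3 h4 hP i
      have hβ'pos : 0 < β' := lt_trans hβ₀pos h1
      have hβ''pos : 0 < β'' := lt_trans hβ'pos h2
      have hβ'1 : β' ≤ 1 := le_of_lt (lt_of_lt_of_le h2 h3)
      have hzmem : xt β' ∈ Set.Icc u 1 := hxt_mem β' hβ'pos.le hβ'1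
      have hz0 : ∀ j, 0 ≤ xt β' j := fun j => le_trans (hq0 j) (le_max_right _ _)
      rcases le_or_gt (β' * p i) (q i) with hc | hc
      · have hx : xt β' i = q i := max_eq_right hc
        have hch := hmono' _ q hzmem hq (hxt_ge_q β')
        rw [hx]
        calc q i = T q i := by rw [hfq]
          _ ≤ T (xt β') i := hch i
      · set α : ℝ := β'' / β' with hα_def
        have hα : 1 < α := (one_lt_div hβ'pos).mpr h2
        have hαpos : 0 < α := lt_trans one_pos hα
        have key := hsub α hα (xt β') hzmem i
        have hδ := hφ (xt β') hzmem i
        have hge : xt β'' ≤ α • xt β' := by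
          refine Pi.le_def.mpr fun j => ?_
          rw [Pi.smul_apply, smul_eq_mul]
          refine max_le ?_ ?_
          · have he : α * (β' * p j) = β'' * p j := by
              rw [hα_def]; field_simp
            calc β'' * p j = α * (β' * p j) := he.symm
              _ ≤ α * xt β' j :=
                mul_le_mul_of_nonneg_left (le_max_left _ _) hαpos.le
          · calc q j ≤ xt β' j := le_max_right _ _
              _ ≤ α * xt β' j := le_mul_of_one_le_left (hz0 j) hα.le
        have hsmem : α • xt β' ∈ Set.Icc u 1 := by
          refine Set.mem_Icc.mpr ⟨Pi.le_def.mpr fun j => ?_, Pi.le_def.mpr fun j => ?_⟩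
          · rw [Pi.smul_apply, smul_eq_mul]
            calc u j ≤ xt β' j := hzmem.1 j
              _ ≤ α * xt β' j := le_mul_of_one_le_left (hz0 j) hα.le
          · rw [Pi.smul_apply, smul_eq_mul]
            have hmax : α * xt β' j = max (α * (β' * p j)) (α * q j) := by
              rw [hxt_def]
              exact mul_max_of_nonneg _ _ hαpos.le
            rw [hmax]
            refine max_le ?_ ?_
            · have he : α * (β' * p j) = β'' * p j := by
                rw [hα_def]; field_simp
              rw [he]
              calc β'' * p j ≤ 1 * 1 := by
                    apply mul_le_mul h3 (hp1 j) (hppos j).le zero_le_one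
                _ = 1 := one_mul 1
            · calc α * q j ≤ α * m := mul_le_mul_of_nonneg_left (hm_le j) hαpos.le
                _ = β'' * m / β' := by rw [hα_def]; ring
                _ ≤ 1 := (div_le_one hβ'pos).mpr h4
        have hchain : T (xt β'') ≤ T (α • xt β') :=
          hmono' _ _ hsmem (hxt_mem β'' (le_trans hβ'pos.le h2.le) h3) hge
        have h5 : β'' * p i ≤ T (α • xt β') i := by
          calc β'' * p i ≤ xt β'' i := le_max_left _ _
            _ ≤ T (xt β'') i := hP i
            _ ≤ T (α • xt β') i := hchain i
        have hx : xt β' i = β' * p i := max_eq_left hc.le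
        rw [hx]
        have he : α * (β' * p i) = β'' * p i := by rw [hα_def]; field_simp
        nlinarith [key, hδ, h5, he, hα, hαpos]
    -- induction
    have ind : ∀ k : ℕ, ∀ β : ℝ, β₀ < β → β ≤ 1 → m ^ k ≤ β → P β := by
      intro k
      induction k with
      | zero =>
        intro β h1 h2 h3
        have hβ1 : β = 1 := le_antisymm h2 (by simpa using h3)
        subst hβ1
        intro i
        have hx1 : xt 1 = p := by
          funext j
          show max (1 * p j) (q j) = p j
          rw [one_mul]
          exact max_eq_left (hstrict j).le
        rw [hx1, hfp]
      | succ k ih =>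
        intro β h1 h2 h3
        rcases eq_or_lt_of_le h2 with h | h
        · subst h
          exact ih 1 hβ₀lt1 le_rfl (pow_le_one₀ hm0.le hm1.le)
        · set β'' : ℝ := min (β / m) 1 with hβ''_def
          have hβpos : 0 < β := lt_trans hβ₀pos h1
          have h2'' : β'' ≤ 1 := min_le_right _ _
          have hβlt : β < β'' := by
            refine lt_min ?_ h
            rw [lt_div_iff₀ hm0]
            nlinarith [hm1, hβpos]
          have h3'' : m ^ k ≤ β'' := by
            refine le_min ?_ (pow_le_one₀ hm0.le hm1.le)
            rw [le_div_iff₀ hm0, ← pow_succ]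
            exact h3
          have hP'' := ih β'' (lt_trans h1 hβlt) h2'' h3''
          refine prop β β'' h1 hβlt h2'' ?_ hP''
          calc β'' * m ≤ (β / m) * m :=
                mul_le_mul_of_nonneg_right (min_le_left _ _) hm0.le
            _ = β := div_mul_cancel₀ _ hm0.ne'
    have Pall : ∀ β : ℝ, β₀ < β → β ≤ 1 → P β := by
      intro β h1 h2
      obtain ⟨k, hk⟩ := exists_pow_lt_of_lt_one (lt_trans hβ₀pos h1) hm1
      exact ind k β h1 h2 hk.le
    -- final contradiction
    set β : ℝ := min (β₀ / m) ((1 + β₀) / 2) with hβ_def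
    have hβgt : β₀ < β := by
      refine lt_min ?_ (by linarith)
      rw [lt_div_iff₀ hm0]
      nlinarith [hm1, hβ₀pos]
    have hβ1 : β ≤ 1 := le_trans (min_le_right _ _) (by linarith)
    have hβpos : 0 < β := lt_trans hβ₀pos hβgt
    have hPβ := Pall β hβgt hβ1
    set α : ℝ := β / β₀ with hα_def
    have hα : 1 < α := (one_lt_div hβ₀pos).mpr hβgt
    have hαpos : 0 < α := lt_trans one_pos hα
    have key := hsub α hα q hq i0
    have hδ := hφ q hq i0
    rw [hfq] at key
    have hβm : β * m ≤ β₀ := by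
      have hle' : β ≤ β₀ / m := min_le_left _ _
      exact (le_div_iff₀ hm0).mp hle'
    have hsmem : α • q ∈ Set.Icc u 1 := by
      refine Set.mem_Icc.mpr ⟨Pi.le_def.mpr fun j => ?_, Pi.le_def.mpr fun j => ?_⟩
      · rw [Pi.smul_apply, smul_eq_mul]
        calc u j ≤ q j := hq.1 j
          _ ≤ α * q j := le_mul_of_one_le_left (hq0 j) hα.le
      · rw [Pi.smul_apply, smul_eq_mul]
        calc α * q j ≤ α * m := mul_le_mul_of_nonneg_left (hm_le j) hαpos.le
          _ = β * m / β₀ := by rw [hα_def]; ring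
          _ ≤ 1 := (div_le_one hβ₀pos).mpr hβm
    have hge : xt β ≤ α • q := by
      refine Pi.le_def.mpr fun j => ?_
      rw [Pi.smul_apply, smul_eq_mul]
      refine max_le ?_ (le_mul_of_one_le_left (hq0 j) hα.le)
      rw [hα_def, div_mul_eq_mul_div, le_div_iff₀ hβ₀pos]
      nlinarith [hβ₀mul j, hβpos]
    have hchain : T (xt β) ≤ T (α • q) :=
      hmono' _ _ hsmem (hxt_mem β hβpos.le hβ1) hge
    have h5 : β * p i0 ≤ T (α • q) i0 := by
      calc β * p i0 ≤ xt β i0 := le_max_left _ _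
        _ ≤ T (xt β) i0 := hPβ i0
        _ ≤ T (α • q) i0 := hchain i0
    have hαq : α * q i0 = β * p i0 := by
      rw [← hβ₀i0, hα_def]; field_simp
    nlinarith [key, hδ, h5, hαq, hα]
  -- main argument: reduce to comparable case via a common lower fixed point
  intro a b ha hb hfa hfb
  set c : Fin n → ℝ := fun i => min (a i) (b i) with hc_def
  have hcmem : c ∈ Set.Icc u 1 :=
    Set.mem_Icc.mpr ⟨Pi.le_def.mpr fun i => le_min (ha.1 i) (hb.1 i),
      Pi.le_def.mpr fun i => le_trans (min_le_left _ _) (ha.2 i)⟩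
  have hca : c ≤ a := Pi.le_def.mpr fun i => min_le_left _ _
  have hcb : c ≤ b := Pi.le_def.mpr fun i => min_le_right _ _
  have hTc : T c ≤ c := by
    refine Pi.le_def.mpr fun i => le_min ?_ ?_
    · calc T c i ≤ T a i := (hmono' a c ha hcmem hca) i
        _ = a i := by rw [hfa]
    · calc T c i ≤ T b i := (hmono' b c hb hcmem hcb) i
        _ = b i := by rw [hfb]
  set s : ℕ → (Fin n → ℝ) := fun k => T^[k] c with hs_def
  have hsS : ∀ k, s (k + 1) = T (s k) := fun k => Function.iterate_succ_apply' T k c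
  have hinv : ∀ k, s k ∈ Set.Icc u 1 ∧ T (s k) ≤ s k := by
    intro k
    induction k with
    | zero => exact ⟨hcmem, hTc⟩
    | succ k ih =>
      constructor
      · rw [hsS]; exact hmaps ih.1
      · rw [hsS]; exact hmono' (s k) (T (s k)) ih.1 (hmaps ih.1) ih.2
  have hanti : ∀ k i, s (k + 1) i ≤ s k i := fun k i => by
    rw [hsS]; exact (hinv k).2 i
  have hbdd : ∀ i, BddBelow (Set.range fun k => s k i) := by
    intro i
    refine ⟨u i, ?_⟩
    rintro x ⟨k, rfl⟩
    exact (hinv k).1.1 i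
  set d : Fin n → ℝ := fun i => ⨅ k, s k i with hd_def
  have hanti' : ∀ i, Antitone (fun k => s k i) :=
    fun i => antitone_nat_of_succ_le (fun k => hanti k i)
  have htend : Filter.Tendsto s Filter.atTop (nhds d) :=
    tendsto_pi_nhds.mpr (fun i => tendsto_atTop_ciInf (hanti' i) (hbdd i))
  have hd_le : ∀ i, d i ≤ c i := fun i => ciInf_le (hbdd i) 0
  have hdmem : d ∈ Set.Icc u 1 := by
    refine Set.mem_Icc.mpr ⟨Pi.le_def.mpr fun i => ?_, Pi.le_def.mpr fun i => ?_⟩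
    · exact le_ciInf (fun k => (hinv k).1.1 i)
    · exact le_trans (hd_le i) (le_trans (min_le_left _ _) (ha.2 i))
  have hda : d ≤ a := Pi.le_def.mpr fun i => le_trans (hd_le i) (min_le_left _ _)
  have hdb : d ≤ b := Pi.le_def.mpr fun i => le_trans (hd_le i) (min_le_right _ _)
  have hTd : T d = d := by
    have h1 : Filter.Tendsto (fun k => T (s k)) Filter.atTop (nhds (T d)) := by
      have hcw : ContinuousWithinAt T (Set.Icc u 1) d := hcont d hdmem
      refine hcw.tendsto.comp ?_
      rw [tendsto_nhdsWithin_iff]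
      exact ⟨htend, Filter.Eventually.of_forall (fun k => (hinv k).1)⟩
    have h2 : Filter.Tendsto (fun k => T (s k)) Filter.atTop (nhds d) := by
      have h := htend.comp (Filter.tendsto_add_atTop_nat 1)
      have heq : (s ∘ fun k => k + 1) = fun k => T (s k) := by
        funext k
        exact hsS k
      rwa [heq] at h
    exact tendsto_nhds_unique h1 h2
  have h1 := comp a d ha hdmem hfa hTd hda
  have h2 := comp b d hb hdmem hfb hTd hdb
  rw [← h1, ← h2]
end

section
/- Under the standing assumptions, the coupled adoption-opinion system admits a unique adoption-diffused equilibrium y* with s* = 0, a^{[k]*} > 0 and d^{[k]*} > 0 entrywise for both k ∈ {1,2}, opinions x^{[k]*} = (I − Λ^{[k]} W̃)^{-1}((I − Λ^{[k]} − Ξ^{[k]}) x^{[k]}(0) + Ξ^{[k]} W a^{[k]*}), and a_i^{[2]*} = (δ_i^{[1]}/δ_i^{[2]}) a_i^{[1]*} for all i. -/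
open Matrix

/-- An adoption-diffused equilibrium: a fixed point of the coupled
adoption-opinion dynamics lying in `[0,1]^{7n}`, satisfying the normalization,
and with entrywise strictly positive adopter fractions for both technologies. -/
def IsAdoptionDiffusedEq {n : ℕ} (W Wt : Matrix (Fin n) (Fin n) ℝ)
    (β δ γ lam ξ x0 : Fin 2 → Fin n → ℝ)
    (y : (Fin n → ℝ) × (Fin 2 → Fin n → ℝ) × (Fin 2 → Fin n → ℝ) × (Fin 2 → Fin n → ℝ)) :
    Prop :=
  let s := y.1; let a := y.2.1; let d := y.2.2.1; let x := y.2.2.2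
  -- state in [0,1]^{7n}
  (∀ i, s i ∈ Set.Icc (0 : ℝ) 1) ∧
  (∀ k i, a k i ∈ Set.Icc (0 : ℝ) 1 ∧ d k i ∈ Set.Icc (0 : ℝ) 1 ∧
    x k i ∈ Set.Icc (0 : ℝ) 1) ∧
  -- normalization
  (∀ i, s i + ∑ k, (a k i + d k i) = 1) ∧
  -- fixed-point (equilibrium) equations of the dynamics
  (∀ i : Fin n, s i * ∑ k, β k i * x k i * ∑ j, W i j * a k j = 0) ∧
  (∀ (k : Fin 2) (i : Fin n),
    β k i * x k i * s i * (∑ j, W i j * a k j) - δ k i * a k i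
      + γ k i * x k i * d (1 - k) i = 0) ∧
  (∀ (k : Fin 2) (i : Fin n),
    - γ (1 - k) i * x (1 - k) i * d k i + δ k i * a k i = 0) ∧
  (∀ (k : Fin 2) (i : Fin n), x k i =
    (1 - lam k i - ξ k i) * x0 k i + lam k i * (∑ j, Wt i j * x k j)
      + ξ k i * (∑ j, W i j * a k j)) ∧
  -- adoption-diffused: strictly positive adopter fractions
  (∀ (k : Fin 2) (i : Fin n), 0 < a k i)

section St14Aux

variable {n : ℕ}

lemma st14_mv_mono {A : Matrix (Fin n) (Fin n) ℝ} (hA : ∀ i j, 0 ≤ A i j)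
    {u v : Fin n → ℝ} (h : ∀ j, u j ≤ v j) (i : Fin n) :
    (A *ᵥ u) i ≤ (A *ᵥ v) i := by
  simp only [Matrix.mulVec, dotProduct]
  exact Finset.sum_le_sum fun j _ => mul_le_mul_of_nonneg_left (h j) (hA i j)

lemma st14_mv_nonneg {A : Matrix (Fin n) (Fin n) ℝ} (hA : ∀ i j, 0 ≤ A i j)
    {u : Fin n → ℝ} (h : ∀ j, 0 ≤ u j) (i : Fin n) : 0 ≤ (A *ᵥ u) i := by
  simp only [Matrix.mulVec, dotProduct]
  exact Finset.sum_nonneg fun j _ => mul_nonneg (hA i j) (h j)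

lemma st14_mv_lin {A : Matrix (Fin n) (Fin n) ℝ} (θ : ℝ) (u : Fin n → ℝ) (i : Fin n) :
    (A *ᵥ fun j => θ * u j) i = θ * (A *ᵥ u) i := by
  simp only [Matrix.mulVec, dotProduct, Finset.mul_sum]
  exact Finset.sum_congr rfl fun j _ => by ring

variable (W Wt : Matrix (Fin n) (Fin n) ℝ) (δ γ lam ξ x0 : Fin 2 → Fin n → ℝ)

/-- The solved opinion vector as a function of the adopter vector. -/
noncomputable def st14X (k : Fin 2) (a : Fin n → ℝ) : Fin n → ℝ :=
  (1 - Matrix.diagonal (lam k) * Wt)⁻¹ *ᵥ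
    ((1 - Matrix.diagonal (lam k) - Matrix.diagonal (ξ k)) *ᵥ x0 k
      + Matrix.diagonal (ξ k) *ᵥ (W *ᵥ a))

/-- The scalar fixed-point map whose fixed points are equilibrium `a⁰` vectors. -/
noncomputable def st14Phi (a : Fin n → ℝ) (i : Fin n) : ℝ :=
  1 / (1 + δ 0 i / δ 1 i
    + δ 0 i / (γ 1 i * st14X W Wt lam ξ x0 1 (fun j => δ 0 j / δ 1 j * a j) i)
    + δ 0 i / (γ 0 i * st14X W Wt lam ξ x0 0 a i))

lemma st14X_split (k : Fin 2) (a : Fin n → ℝ) (i : Fin n) :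
    st14X W Wt lam ξ x0 k a i =
      ((1 - Matrix.diagonal (lam k) * Wt)⁻¹ *ᵥ
        ((1 - Matrix.diagonal (lam k) - Matrix.diagonal (ξ k)) *ᵥ x0 k)) i
      + ((1 - Matrix.diagonal (lam k) * Wt)⁻¹ *ᵥ
        (Matrix.diagonal (ξ k) *ᵥ (W *ᵥ a))) i := by
  simp [st14X, Matrix.mulVec_add]

section

variable (hW : ∀ i j, 0 ≤ W i j) (hWrow : ∀ i, ∑ j, W i j = 1)
  (hξ : ∀ k i, 0 < ξ k i)
  (hMnn : ∀ (k : Fin 2) (i j : Fin n), 0 ≤ (1 - Matrix.diagonal (lam k) * Wt)⁻¹ i j)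
  (hxe : ∀ (k : Fin 2) (i : Fin n),
      0 < ((1 - Matrix.diagonal (lam k) * Wt)⁻¹ *ᵥ
        ((1 - Matrix.diagonal (lam k) - Matrix.diagonal (ξ k)) *ᵥ x0 k)) i)

include hW hξ hMnn hxe in
lemma st14X_pos (k : Fin 2) {a : Fin n → ℝ} (ha : ∀ j, 0 ≤ a j) (i : Fin n) :
    0 < st14X W Wt lam ξ x0 k a i := by
  rw [st14X_split]
  have h2 : 0 ≤ ((1 - Matrix.diagonal (lam k) * Wt)⁻¹ *ᵥ
      (Matrix.diagonal (ξ k) *ᵥ (W *ᵥ a))) i := by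
    refine st14_mv_nonneg (hMnn k) (fun j => ?_) i
    rw [Matrix.mulVec_diagonal]
    exact mul_nonneg (hξ k j).le (st14_mv_nonneg (hW) ha j)
  linarith [hxe k i]

include hW hMnn in
lemma st14X_mono (k : Fin 2) {u v : Fin n → ℝ} (huv : ∀ j, u j ≤ v j)
    (hξnn : ∀ k i, 0 ≤ ξ k i) (i : Fin n) :
    st14X W Wt lam ξ x0 k u i ≤ st14X W Wt lam ξ x0 k v i := by
  rw [st14X_split, st14X_split]
  have : ∀ j, (Matrix.diagonal (ξ k) *ᵥ (W *ᵥ u)) j ≤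
      (Matrix.diagonal (ξ k) *ᵥ (W *ᵥ v)) j := by
    intro j
    rw [Matrix.mulVec_diagonal, Matrix.mulVec_diagonal]
    exact mul_le_mul_of_nonneg_left (st14_mv_mono hW huv j) (hξnn k j)
  linarith [st14_mv_mono (hMnn k) this i]

include hxe in
lemma st14X_subhom (k : Fin 2) {θ : ℝ} (hθ : 1 ≤ θ) (a : Fin n → ℝ) (i : Fin n) :
    st14X W Wt lam ξ x0 k (fun j => θ * a j) i ≤ θ * st14X W Wt lam ξ x0 k a i := by
  rw [st14X_split, st14X_split]
  have h1 : (Matrix.diagonal (ξ k) *ᵥ (W *ᵥ fun j => θ * a j)) =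
      fun j => θ * (Matrix.diagonal (ξ k) *ᵥ (W *ᵥ a)) j := by
    funext j
    rw [Matrix.mulVec_diagonal, Matrix.mulVec_diagonal]
    rw [st14_mv_lin]
    ring
  rw [h1, st14_mv_lin]
  nlinarith [hxe k i]

include hW hWrow hMnn in
lemma st14X_le_one (k : Fin 2)
    (hWt : ∀ i j, 0 ≤ Wt i j) (hWtrow : ∀ i, ∑ j, Wt i j = 1)
    (hlam : ∀ k i, 0 ≤ lam k i) (hξnn : ∀ k i, 0 ≤ ξ k i)
    (hlx : ∀ k i, lam k i + ξ k i < 1)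
    (hx0 : ∀ k i, x0 k i ∈ Set.Icc (0 : ℝ) 1)
    (hunit : ∀ k : Fin 2, IsUnit (1 - Matrix.diagonal (lam k) * Wt))
    {a : Fin n → ℝ} (ha0 : ∀ j, 0 ≤ a j) (ha1 : ∀ j, a j ≤ 1) (i : Fin n) :
    st14X W Wt lam ξ x0 k a i ≤ 1 := by
  have hdet := (Matrix.isUnit_iff_isUnit_det _).mp (hunit k)
  -- (1 - Λ Wt) *ᵥ 1 = 1 - λ
  have hB1 : (1 - Matrix.diagonal (lam k) * Wt) *ᵥ (fun _ => (1:ℝ)) =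
      fun i => 1 - lam k i := by
    funext i
    rw [Matrix.sub_mulVec, ← Matrix.mulVec_mulVec]
    have : (Wt *ᵥ fun _ => (1:ℝ)) = fun _ => (1:ℝ) := by
      funext j
      simp [Matrix.mulVec, dotProduct, hWtrow j]
    rw [this]
    simp [Matrix.mulVec_diagonal, Matrix.one_mulVec]
  have hM1 : ((1 - Matrix.diagonal (lam k) * Wt)⁻¹ *ᵥ (fun i => 1 - lam k i)) =
      fun _ => (1:ℝ) := by
    rw [← hB1, Matrix.mulVec_mulVec, Matrix.nonsing_inv_mul _ hdet, Matrix.one_mulVec]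
  have hinner : ∀ i, ((1 - Matrix.diagonal (lam k) - Matrix.diagonal (ξ k)) *ᵥ x0 k) i
      + (Matrix.diagonal (ξ k) *ᵥ (W *ᵥ a)) i ≤ 1 - lam k i := by
    intro i
    have hv0 : ((1 - Matrix.diagonal (lam k) - Matrix.diagonal (ξ k)) *ᵥ x0 k) i =
        (1 - lam k i - ξ k i) * x0 k i := by
      rw [Matrix.sub_mulVec, Matrix.sub_mulVec]
      simp only [Pi.sub_apply, Matrix.mulVec_diagonal, Matrix.one_mulVec]
      ring
    have hWa : (W *ᵥ a) i ≤ 1 := by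
      calc (W *ᵥ a) i ≤ (W *ᵥ fun _ => (1:ℝ)) i := st14_mv_mono hW ha1 i
      _ = 1 := by simp [Matrix.mulVec, dotProduct, hWrow i]
    have hWa0 : 0 ≤ (W *ᵥ a) i := st14_mv_nonneg hW ha0 i
    have h1 : (1 - lam k i - ξ k i) * x0 k i ≤ 1 - lam k i - ξ k i := by
      have := hlx k i
      nlinarith [(hx0 k i).1, (hx0 k i).2]
    have h2 : (Matrix.diagonal (ξ k) *ᵥ (W *ᵥ a)) i ≤ ξ k i := by
      rw [Matrix.mulVec_diagonal]
      nlinarith [hξnn k i]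
    rw [hv0]
    linarith
  have hfin : st14X W Wt lam ξ x0 k a i
      ≤ ((1 - Matrix.diagonal (lam k) * Wt)⁻¹ *ᵥ (fun i => 1 - lam k i)) i := by
    rw [st14X_split]
    have h1 := st14_mv_mono (hMnn k)
      (u := fun i => ((1 - Matrix.diagonal (lam k) - Matrix.diagonal (ξ k)) *ᵥ x0 k) i
        + (Matrix.diagonal (ξ k) *ᵥ (W *ᵥ a)) i)
      (v := fun i => 1 - lam k i) hinner i
    have h2 : ((1 - Matrix.diagonal (lam k) * Wt)⁻¹ *ᵥ
        fun i => ((1 - Matrix.diagonal (lam k) - Matrix.diagonal (ξ k)) *ᵥ x0 k) i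
          + (Matrix.diagonal (ξ k) *ᵥ (W *ᵥ a)) i) i
        = ((1 - Matrix.diagonal (lam k) * Wt)⁻¹ *ᵥ
          ((1 - Matrix.diagonal (lam k) - Matrix.diagonal (ξ k)) *ᵥ x0 k)) i
        + ((1 - Matrix.diagonal (lam k) * Wt)⁻¹ *ᵥ
          (Matrix.diagonal (ξ k) *ᵥ (W *ᵥ a))) i := by
      simp only [Matrix.mulVec, dotProduct, mul_add]
      rw [Finset.sum_add_distrib]
    rw [h2] at h1
    exact h1
  calc st14X W Wt lam ξ x0 k a i
      ≤ ((1 - Matrix.diagonal (lam k) * Wt)⁻¹ *ᵥ (fun i => 1 - lam k i)) i := hfin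
    _ = 1 := by rw [hM1]

end

section

variable (hW : ∀ i j, 0 ≤ W i j)
  (hδ : ∀ k i, 0 < δ k i ∧ δ k i ≤ 1) (hγ : ∀ k i, 0 < γ k i ∧ γ k i < 1)
  (hξ : ∀ k i, 0 < ξ k i)
  (hMnn : ∀ (k : Fin 2) (i j : Fin n), 0 ≤ (1 - Matrix.diagonal (lam k) * Wt)⁻¹ i j)
  (hxe : ∀ (k : Fin 2) (i : Fin n),
      0 < ((1 - Matrix.diagonal (lam k) * Wt)⁻¹ *ᵥ
        ((1 - Matrix.diagonal (lam k) - Matrix.diagonal (ξ k)) *ᵥ x0 k)) i)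

/-- The denominator of `st14Phi`. -/
noncomputable def st14D (a : Fin n → ℝ) (i : Fin n) : ℝ :=
  1 + δ 0 i / δ 1 i
    + δ 0 i / (γ 1 i * st14X W Wt lam ξ x0 1 (fun j => δ 0 j / δ 1 j * a j) i)
    + δ 0 i / (γ 0 i * st14X W Wt lam ξ x0 0 a i)

lemma st14Phi_def (a : Fin n → ℝ) (i : Fin n) :
    st14Phi W Wt δ γ lam ξ x0 a i = 1 / st14D W Wt δ γ lam ξ x0 a i := rfl

include hW hδ hγ hξ hMnn hxe in
lemma st14D_pos {a : Fin n → ℝ} (ha : ∀ j, 0 ≤ a j) (i : Fin n) :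
    1 < st14D W Wt δ γ lam ξ x0 a i := by
  have hc : 0 < δ 0 i / δ 1 i := div_pos (hδ 0 i).1 (hδ 1 i).1
  have hca : ∀ j, 0 ≤ δ 0 j / δ 1 j * a j :=
    fun j => mul_nonneg (div_pos (hδ 0 j).1 (hδ 1 j).1).le (ha j)
  have hX1 := st14X_pos W Wt lam ξ x0 hW hξ hMnn hxe 1 hca i
  have hX0 := st14X_pos W Wt lam ξ x0 hW hξ hMnn hxe 0 ha i
  have h1 : 0 < δ 0 i / (γ 1 i * st14X W Wt lam ξ x0 1 (fun j => δ 0 j / δ 1 j * a j) i) :=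
    div_pos (hδ 0 i).1 (mul_pos (hγ 1 i).1 hX1)
  have h0 : 0 < δ 0 i / (γ 0 i * st14X W Wt lam ξ x0 0 a i) :=
    div_pos (hδ 0 i).1 (mul_pos (hγ 0 i).1 hX0)
  rw [st14D]
  linarith

include hW hδ hγ hξ hMnn hxe in
lemma st14Phi_pos {a : Fin n → ℝ} (ha : ∀ j, 0 ≤ a j) (i : Fin n) :
    0 < st14Phi W Wt δ γ lam ξ x0 a i := by
  rw [st14Phi_def]
  have := st14D_pos W Wt δ γ lam ξ x0 hW hδ hγ hξ hMnn hxe ha i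
  positivity

include hW hδ hγ hξ hMnn hxe in
lemma st14Phi_le_one {a : Fin n → ℝ} (ha : ∀ j, 0 ≤ a j) (i : Fin n) :
    st14Phi W Wt δ γ lam ξ x0 a i ≤ 1 := by
  rw [st14Phi_def]
  have := st14D_pos W Wt δ γ lam ξ x0 hW hδ hγ hξ hMnn hxe ha i
  rw [div_le_one (by linarith)]
  linarith

include hW hδ hγ hξ hMnn hxe in
lemma st14Phi_mono {u v : Fin n → ℝ} (hu : ∀ j, 0 ≤ u j) (huv : ∀ j, u j ≤ v j) (i : Fin n) :
    st14Phi W Wt δ γ lam ξ x0 u i ≤ st14Phi W Wt δ γ lam ξ x0 v i := by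
  have hv : ∀ j, 0 ≤ v j := fun j => (hu j).trans (huv j)
  have hcu : ∀ j, 0 ≤ δ 0 j / δ 1 j * u j :=
    fun j => mul_nonneg (div_pos (hδ 0 j).1 (hδ 1 j).1).le (hu j)
  have hcuv : ∀ j, δ 0 j / δ 1 j * u j ≤ δ 0 j / δ 1 j * v j :=
    fun j => mul_le_mul_of_nonneg_left (huv j) (div_pos (hδ 0 j).1 (hδ 1 j).1).le
  have hξnn : ∀ k i, 0 ≤ ξ k i := fun k i => (hξ k i).le
  have hX1u := st14X_pos W Wt lam ξ x0 hW hξ hMnn hxe 1 hcu i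
  have hX0u := st14X_pos W Wt lam ξ x0 hW hξ hMnn hxe 0 hu i
  have hX1m := st14X_mono W Wt lam ξ x0 hW hMnn 1 hcuv hξnn i
  have hX0m := st14X_mono W Wt lam ξ x0 hW hMnn 0 huv hξnn i
  rw [st14Phi_def, st14Phi_def]
  have hDv : 0 < st14D W Wt δ γ lam ξ x0 v i := by
    linarith [st14D_pos W Wt δ γ lam ξ x0 hW hδ hγ hξ hMnn hxe hv i]
  apply one_div_le_one_div_of_le hDv
  rw [st14D, st14D]
  have t1 : δ 0 i / (γ 1 i * st14X W Wt lam ξ x0 1 (fun j => δ 0 j / δ 1 j * v j) i)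
      ≤ δ 0 i / (γ 1 i * st14X W Wt lam ξ x0 1 (fun j => δ 0 j / δ 1 j * u j) i) :=
    div_le_div_of_nonneg_left (hδ 0 i).1.le (mul_pos (hγ 1 i).1 hX1u)
      (mul_le_mul_of_nonneg_left hX1m (hγ 1 i).1.le)
  have t0 : δ 0 i / (γ 0 i * st14X W Wt lam ξ x0 0 v i)
      ≤ δ 0 i / (γ 0 i * st14X W Wt lam ξ x0 0 u i) :=
    div_le_div_of_nonneg_left (hδ 0 i).1.le (mul_pos (hγ 0 i).1 hX0u)
      (mul_le_mul_of_nonneg_left hX0m (hγ 0 i).1.le)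
  linarith

include hW hδ hγ hξ hMnn hxe in
lemma st14Phi_subhom {θ : ℝ} (hθ : 1 < θ) {a : Fin n → ℝ} (ha : ∀ j, 0 ≤ a j) (i : Fin n) :
    st14Phi W Wt δ γ lam ξ x0 (fun j => θ * a j) i < θ * st14Phi W Wt δ γ lam ξ x0 a i := by
  have hca : ∀ j, 0 ≤ δ 0 j / δ 1 j * a j :=
    fun j => mul_nonneg (div_pos (hδ 0 j).1 (hδ 1 j).1).le (ha j)
  have hθa : ∀ j, 0 ≤ θ * a j := fun j => mul_nonneg (by linarith) (ha j)
  have hcθa : ∀ j, 0 ≤ δ 0 j / δ 1 j * (θ * a j) :=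
    fun j => mul_nonneg (div_pos (hδ 0 j).1 (hδ 1 j).1).le (hθa j)
  have hX1a := st14X_pos W Wt lam ξ x0 hW hξ hMnn hxe 1 hca i
  have hX0a := st14X_pos W Wt lam ξ x0 hW hξ hMnn hxe 0 ha i
  have hX1t := st14X_pos W Wt lam ξ x0 hW hξ hMnn hxe 1 hcθa i
  have hX0t := st14X_pos W Wt lam ξ x0 hW hξ hMnn hxe 0 hθa i
  -- rewrite the scaled argument of X1
  have harg : (fun j => δ 0 j / δ 1 j * (θ * a j)) =
      (fun j => θ * (δ 0 j / δ 1 j * a j)) := by funext j; ring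
  have hs1 : st14X W Wt lam ξ x0 1 (fun j => δ 0 j / δ 1 j * (θ * a j)) i
      ≤ θ * st14X W Wt lam ξ x0 1 (fun j => δ 0 j / δ 1 j * a j) i := by
    rw [harg]
    exact st14X_subhom W Wt lam ξ x0 hxe 1 hθ.le _ i
  have hs0 : st14X W Wt lam ξ x0 0 (fun j => θ * a j) i
      ≤ θ * st14X W Wt lam ξ x0 0 a i :=
    st14X_subhom W Wt lam ξ x0 hxe 0 hθ.le _ i
  have hDa : 1 < st14D W Wt δ γ lam ξ x0 a i :=
    st14D_pos W Wt δ γ lam ξ x0 hW hδ hγ hξ hMnn hxe ha i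
  have hDt : 1 < st14D W Wt δ γ lam ξ x0 (fun j => θ * a j) i :=
    st14D_pos W Wt δ γ lam ξ x0 hW hδ hγ hξ hMnn hxe hθa i
  rw [st14Phi_def, st14Phi_def, mul_one_div]
  rw [div_lt_div_iff₀ (by linarith) (by linarith)]
  -- goal : 1 * D a ≤ θ * D (θ a); show D a < θ * D(θa)
  rw [one_mul]
  rw [st14D, st14D]
  have hc : 0 < δ 0 i / δ 1 i := div_pos (hδ 0 i).1 (hδ 1 i).1
  -- term comparisons
  have t1 : δ 0 i / (γ 1 i * st14X W Wt lam ξ x0 1 (fun j => δ 0 j / δ 1 j * a j) i)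
      ≤ θ * (δ 0 i / (γ 1 i * st14X W Wt lam ξ x0 1 (fun j => δ 0 j / δ 1 j * (θ * a j)) i)) := by
    rw [mul_div_assoc']
    rw [div_le_div_iff₀ (mul_pos (hγ 1 i).1 hX1a) (mul_pos (hγ 1 i).1 hX1t)]
    nlinarith [mul_le_mul_of_nonneg_left hs1 (mul_nonneg (hδ 0 i).1.le (hγ 1 i).1.le)]
  have t0 : δ 0 i / (γ 0 i * st14X W Wt lam ξ x0 0 a i)
      ≤ θ * (δ 0 i / (γ 0 i * st14X W Wt lam ξ x0 0 (fun j => θ * a j) i)) := by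
    rw [mul_div_assoc']
    rw [div_le_div_iff₀ (mul_pos (hγ 0 i).1 hX0a) (mul_pos (hγ 0 i).1 hX0t)]
    nlinarith [mul_le_mul_of_nonneg_left hs0 (mul_nonneg (hδ 0 i).1.le (hγ 0 i).1.le)]
  nlinarith

end

section

variable (hW : ∀ i j, 0 ≤ W i j)
  (hδ : ∀ k i, 0 < δ k i ∧ δ k i ≤ 1) (hγ : ∀ k i, 0 < γ k i ∧ γ k i < 1)
  (hξ : ∀ k i, 0 < ξ k i)
  (hMnn : ∀ (k : Fin 2) (i j : Fin n), 0 ≤ (1 - Matrix.diagonal (lam k) * Wt)⁻¹ i j)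
  (hxe : ∀ (k : Fin 2) (i : Fin n),
      0 < ((1 - Matrix.diagonal (lam k) * Wt)⁻¹ *ᵥ
        ((1 - Matrix.diagonal (lam k) - Matrix.diagonal (ξ k)) *ᵥ x0 k)) i)
  (hunit : ∀ k : Fin 2, IsUnit (1 - Matrix.diagonal (lam k) * Wt))

include hunit in
/-- The opinion equilibrium equation is equivalent to its solved form. -/
lemma st14_E4_iff (k : Fin 2) (x a : Fin n → ℝ) :
    x = st14X W Wt lam ξ x0 k a ↔
    ∀ i, x i = (1 - lam k i - ξ k i) * x0 k i + lam k i * (∑ j, Wt i j * x j)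
      + ξ k i * (∑ j, W i j * a j) := by
  have hdet := (Matrix.isUnit_iff_isUnit_det _).mp (hunit k)
  have hcomp : ∀ z : Fin n → ℝ, ∀ i,
      ((1 - Matrix.diagonal (lam k) * Wt) *ᵥ z) i = z i - lam k i * ∑ j, Wt i j * z j := by
    intro z i
    rw [Matrix.sub_mulVec, ← Matrix.mulVec_mulVec]
    simp only [Pi.sub_apply, Matrix.one_mulVec, Matrix.mulVec_diagonal]
    simp [Matrix.mulVec, dotProduct]
  have hv0 : ∀ i, ((1 - Matrix.diagonal (lam k) - Matrix.diagonal (ξ k)) *ᵥ x0 k) i =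
      (1 - lam k i - ξ k i) * x0 k i := by
    intro i
    rw [Matrix.sub_mulVec, Matrix.sub_mulVec]
    simp only [Pi.sub_apply, Matrix.one_mulVec, Matrix.mulVec_diagonal]
    ring
  have hq : ∀ i, (Matrix.diagonal (ξ k) *ᵥ (W *ᵥ a)) i = ξ k i * ∑ j, W i j * a j := by
    intro i
    rw [Matrix.mulVec_diagonal]
    rfl
  have hvec : x = st14X W Wt lam ξ x0 k a ↔
      (1 - Matrix.diagonal (lam k) * Wt) *ᵥ x =
        ((1 - Matrix.diagonal (lam k) - Matrix.diagonal (ξ k)) *ᵥ x0 k)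
        + (Matrix.diagonal (ξ k) *ᵥ (W *ᵥ a)) := by
    constructor
    · rintro rfl
      rw [st14X, Matrix.mulVec_mulVec, Matrix.mul_nonsing_inv _ hdet, Matrix.one_mulVec]
    · intro h
      rw [st14X, ← h, Matrix.mulVec_mulVec, Matrix.nonsing_inv_mul _ hdet, Matrix.one_mulVec]
  rw [hvec]
  constructor
  · intro h i
    have hh := congrFun h i
    rw [hcomp x i, Pi.add_apply, hv0 i, hq i] at hh
    linarith
  · intro h
    funext i
    rw [hcomp x i, Pi.add_apply, hv0 i, hq i]
    have := h i
    linarith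

include hW hδ hγ hξ hMnn hxe in
/-- Existence of a fixed point of `st14Phi` in `(0,1]ⁿ` by Knaster–Tarski. -/
lemma st14_fix_exists : ∃ a : Fin n → ℝ, (∀ i, 0 < a i) ∧ (∀ i, a i ≤ 1) ∧
    (∀ i, st14Phi W Wt δ γ lam ξ x0 a i = a i) := by
  haveI : Fact ((0:ℝ) ≤ 1) := ⟨zero_le_one⟩
  let L := Fin n → Set.Icc (0:ℝ) 1
  let F : L →o L :=
    { toFun := fun b i => ⟨st14Phi W Wt δ γ lam ξ x0 (fun j => (b j : ℝ)) i,
        (st14Phi_pos W Wt δ γ lam ξ x0 hW hδ hγ hξ hMnn hxe (fun j => (b j).2.1) i).le,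
        st14Phi_le_one W Wt δ γ lam ξ x0 hW hδ hγ hξ hMnn hxe (fun j => (b j).2.1) i⟩
      monotone' := by
        intro b b' hb i
        exact st14Phi_mono W Wt δ γ lam ξ x0 hW hδ hγ hξ hMnn hxe
          (fun j => (b j).2.1) (fun j => hb j) i }
  have hfix := OrderHom.map_lfp F
  set b := OrderHom.lfp F with hb
  refine ⟨fun i => (b i : ℝ), ?_, fun i => (b i).2.2, ?_⟩
  · intro i
    have heq : st14Phi W Wt δ γ lam ξ x0 (fun j => (b j : ℝ)) i = (b i : ℝ) :=
      congrArg Subtype.val (congrFun hfix i)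
    show (0:ℝ) < (b i : ℝ)
    rw [← heq]
    exact st14Phi_pos W Wt δ γ lam ξ x0 hW hδ hγ hξ hMnn hxe (fun j => (b j).2.1) i
  · intro i
    exact congrArg Subtype.val (congrFun hfix i)

include hW hδ hγ hξ hMnn hxe in
lemma st14_fix_le {a b : Fin n → ℝ} (ha : ∀ i, 0 < a i) (hb : ∀ i, 0 < b i)
    (hfa : ∀ i, st14Phi W Wt δ γ lam ξ x0 a i = a i)
    (hfb : ∀ i, st14Phi W Wt δ γ lam ξ x0 b i = b i) :
    ∀ i, b i ≤ a i := by
  intro i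
  obtain ⟨i0, -, hmax⟩ := Finset.exists_max_image Finset.univ (fun j => b j / a j)
    ⟨i, Finset.mem_univ i⟩
  set θ := b i0 / a i0 with hθdef
  by_cases hθ : θ ≤ 1
  · have hi := hmax i (Finset.mem_univ i)
    have : b i / a i ≤ 1 := le_trans hi hθ
    rwa [div_le_one (ha i)] at this
  · push_neg at hθ
    exfalso
    have hba : ∀ j, b j ≤ θ * a j := by
      intro j
      have hj := hmax j (Finset.mem_univ j)
      rw [div_le_iff₀ (ha j)] at hj
      linarith [hj]
    have h1 : b i0 ≤ st14Phi W Wt δ γ lam ξ x0 (fun j => θ * a j) i0 := by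
      rw [← hfb i0]
      exact st14Phi_mono W Wt δ γ lam ξ x0 hW hδ hγ hξ hMnn hxe
        (fun j => (hb j).le) hba i0
    have h2 : st14Phi W Wt δ γ lam ξ x0 (fun j => θ * a j) i0
        < θ * st14Phi W Wt δ γ lam ξ x0 a i0 :=
      st14Phi_subhom W Wt δ γ lam ξ x0 hW hδ hγ hξ hMnn hxe hθ (fun j => (ha j).le) i0
    rw [hfa i0] at h2
    have h3 : θ * a i0 = b i0 := by
      rw [hθdef]
      exact div_mul_cancel₀ (b i0) (ha i0).ne'
    linarith

include hW hδ hγ hξ hMnn hxe in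
lemma st14_fix_unique {a b : Fin n → ℝ} (ha : ∀ i, 0 < a i) (hb : ∀ i, 0 < b i)
    (hfa : ∀ i, st14Phi W Wt δ γ lam ξ x0 a i = a i)
    (hfb : ∀ i, st14Phi W Wt δ γ lam ξ x0 b i = b i) : a = b := by
  funext i
  exact le_antisymm
    (st14_fix_le W Wt δ γ lam ξ x0 hW hδ hγ hξ hMnn hxe hb ha hfb hfa i)
    (st14_fix_le W Wt δ γ lam ξ x0 hW hδ hγ hξ hMnn hxe ha hb hfa hfb i)

end

lemma st14_row_pos (hW : ∀ i j, 0 ≤ W i j) (hWrow : ∀ i, ∑ j, W i j = 1)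
    {a : Fin n → ℝ} (ha : ∀ j, 0 < a j) (i : Fin n) : 0 < ∑ j, W i j * a j := by
  have hne : ∃ j, 0 < W i j := by
    by_contra h
    push_neg at h
    have hz : ∑ j, W i j = 0 :=
      Finset.sum_eq_zero fun j _ => le_antisymm (h j) (hW i j)
    rw [hWrow i] at hz
    norm_num at hz
  obtain ⟨j0, hj0⟩ := hne
  exact Finset.sum_pos' (fun j _ => mul_nonneg (hW i j) (ha j).le)
    ⟨j0, Finset.mem_univ _, mul_pos hj0 (ha j0)⟩

section

variable (β : Fin 2 → Fin n → ℝ)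
variable (hW : ∀ i j, 0 ≤ W i j) (hWrow : ∀ i, ∑ j, W i j = 1)
  (hβnn : ∀ k i, 0 ≤ β k i) (hβ : ∀ i, 0 < β 0 i + β 1 i ∧ β 0 i + β 1 i < 1)
  (hδ : ∀ k i, 0 < δ k i ∧ δ k i ≤ 1) (hγ : ∀ k i, 0 < γ k i ∧ γ k i < 1)
  (hunit : ∀ k : Fin 2, IsUnit (1 - Matrix.diagonal (lam k) * Wt))

include hW hWrow hβnn hβ hδ hγ hunit in
/-- Characterization of any adoption-diffused equilibrium. -/
lemma st14_char (s : Fin n → ℝ) (a d x : Fin 2 → Fin n → ℝ)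
    (hy : IsAdoptionDiffusedEq W Wt β δ γ lam ξ x0 (s, a, d, x)) :
    (∀ i, s i = 0) ∧ (∀ k i, 0 < d k i) ∧ (∀ k i, 0 < x k i) ∧
    (∀ k, x k = st14X W Wt lam ξ x0 k (a k)) ∧
    (∀ k i, a k i = δ 0 i / δ k i * a 0 i) ∧
    (∀ i, st14Phi W Wt δ γ lam ξ x0 (a 0) i = a 0 i) ∧
    (∀ k i, d k i = δ k i * a k i / (γ (1 - k) i * x (1 - k) i)) := by
  obtain ⟨hm1, hm2, hnrm, hE1, hE2, hE3, hE4, hapos⟩ := hy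
  dsimp only at hm1 hm2 hnrm hE1 hE2 hE3 hE4 hapos
  have hsub : ∀ k : Fin 2, 1 - (1 - k) = k := by decide
  have h10 : (1 : Fin 2) - 0 = 1 := rfl
  have h11 : (1 : Fin 2) - 1 = 0 := rfl
  -- positivity of opinions and distinguishers
  have key : ∀ k i, 0 < x k i ∧ 0 < d (1 - k) i := by
    intro k i
    have h3 := hE3 (1 - k) i
    rw [hsub k] at h3
    have hP : 0 < δ (1 - k) i * a (1 - k) i := mul_pos (hδ (1 - k) i).1 (hapos (1 - k) i)
    have hxnn : 0 ≤ x k i := (hm2 k i).2.2.1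
    have hdnn : 0 ≤ d (1 - k) i := (hm2 (1 - k) i).2.1.1
    have hγp := (hγ k i).1
    constructor
    · by_contra hx
      push_neg at hx
      have hx0 : x k i = 0 := le_antisymm hx hxnn
      rw [hx0] at h3
      nlinarith
    · by_contra hd
      push_neg at hd
      have hd0 : d (1 - k) i = 0 := le_antisymm hd hdnn
      rw [hd0] at h3
      nlinarith
  have hx_pos : ∀ k i, 0 < x k i := fun k i => (key k i).1
  have hd_pos : ∀ k i, 0 < d k i := by
    intro k i
    have := (key (1 - k) i).2
    rwa [hsub k] at this
  -- susceptible fraction vanishes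
  have hs0 : ∀ i, s i = 0 := by
    intro i
    have h1 := hE1 i
    have hT : 0 < ∑ k, β k i * x k i * ∑ j, W i j * a k j := by
      have hterm : ∀ k : Fin 2, 0 ≤ β k i * x k i * ∑ j, W i j * a k j :=
        fun k => mul_nonneg (mul_nonneg (hβnn k i) (hx_pos k i).le)
          (st14_row_pos W hW hWrow (fun j => hapos k j) i).le
      have hk0 : ∃ k0 : Fin 2, 0 < β k0 i := by
        rcases lt_or_ge 0 (β 0 i) with h | h
        · exact ⟨0, h⟩
        · exact ⟨1, by linarith [(hβ i).1]⟩
      obtain ⟨k0, hk0⟩ := hk0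
      exact Finset.sum_pos' (fun k _ => hterm k)
        ⟨k0, Finset.mem_univ _, mul_pos (mul_pos hk0 (hx_pos k0 i))
          (st14_row_pos W hW hWrow (fun j => hapos k0 j) i)⟩
    rcases mul_eq_zero.mp h1 with h | h
    · exact h
    · exact absurd h hT.ne'
  -- balance of adoption rates
  have hδa : ∀ k i, δ k i * a k i = δ (1 - k) i * a (1 - k) i := by
    intro k i
    have h2 := hE2 k i
    rw [hs0 i] at h2
    have h3 := hE3 (1 - k) i
    rw [hsub k] at h3
    linear_combination -h2 - h3
  have ha_e : ∀ k i, a k i = δ 0 i / δ k i * a 0 i := by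
    intro k i
    fin_cases k
    · show a 0 i = δ 0 i / δ 0 i * a 0 i
      rw [div_self (hδ 0 i).1.ne', one_mul]
    · show a 1 i = δ 0 i / δ 1 i * a 0 i
      have h := hδa 0 i
      rw [h10] at h
      rw [div_mul_eq_mul_div, eq_div_iff (hδ 1 i).1.ne']
      linear_combination -h
  have hxeq : ∀ k, x k = st14X W Wt lam ξ x0 k (a k) := by
    intro k
    rw [st14_E4_iff W Wt lam ξ x0 hunit k]
    exact fun i => hE4 k i
  have hdeq : ∀ k i, d k i = δ k i * a k i / (γ (1 - k) i * x (1 - k) i) := by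
    intro k i
    have h3 := hE3 k i
    rw [eq_div_iff (mul_pos (hγ (1 - k) i).1 (hx_pos (1 - k) i)).ne']
    linear_combination -h3
  have hfixy : ∀ i, st14Phi W Wt δ γ lam ξ x0 (a 0) i = a 0 i := by
    intro i
    have hn := hnrm i
    rw [hs0 i, Fin.sum_univ_two] at hn
    have ha1f : a 1 = fun j => δ 0 j / δ 1 j * a 0 j := funext fun j => ha_e 1 j
    have e1 : st14X W Wt lam ξ x0 1 (fun j => δ 0 j / δ 1 j * a 0 j) i = x 1 i := by
      rw [hxeq 1, ha1f]
    have e0 : st14X W Wt lam ξ x0 0 (a 0) i = x 0 i := by rw [hxeq 0]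
    have hD : st14D W Wt δ γ lam ξ x0 (a 0) i =
        1 + δ 0 i / δ 1 i + δ 0 i / (γ 1 i * x 1 i) + δ 0 i / (γ 0 i * x 0 i) := by
      simp only [st14D]
      rw [e1, e0]
    have hx1p := hx_pos 1 i
    have hx0p := hx_pos 0 i
    have hγ1 := (hγ 1 i).1
    have hγ0 := (hγ 0 i).1
    have hδ1 := (hδ 1 i).1
    have hδ0 := (hδ 0 i).1
    have hDpos : 0 < 1 + δ 0 i / δ 1 i + δ 0 i / (γ 1 i * x 1 i) + δ 0 i / (γ 0 i * x 0 i) := by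
      positivity
    rw [st14Phi_def, hD, eq_comm, eq_div_iff hDpos.ne']
    rw [hdeq 0 i, hdeq 1 i, h10, h11, ha_e 1 i] at hn
    field_simp at hn ⊢
    linear_combination hn
  exact ⟨hs0, hd_pos, hx_pos, hxeq, ha_e, hfixy, hdeq⟩

end

/-- Candidate equilibrium adopter fractions. -/
noncomputable def st14as (δ : Fin 2 → Fin n → ℝ) (af : Fin n → ℝ) : Fin 2 → Fin n → ℝ :=
  fun k i => δ 0 i / δ k i * af i

/-- Candidate equilibrium opinions. -/
noncomputable def st14xs (W Wt : Matrix (Fin n) (Fin n) ℝ) (δ lam ξ x0 : Fin 2 → Fin n → ℝ)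
    (af : Fin n → ℝ) : Fin 2 → Fin n → ℝ :=
  fun k => st14X W Wt lam ξ x0 k (st14as δ af k)

/-- Candidate equilibrium distinguisher fractions. -/
noncomputable def st14ds (W Wt : Matrix (Fin n) (Fin n) ℝ) (δ γ lam ξ x0 : Fin 2 → Fin n → ℝ)
    (af : Fin n → ℝ) : Fin 2 → Fin n → ℝ :=
  fun k i => δ k i * st14as δ af k i /
    (γ (1 - k) i * st14xs W Wt δ lam ξ x0 af (1 - k) i)

section

variable (β : Fin 2 → Fin n → ℝ)
variable (hW : ∀ i j, 0 ≤ W i j) (hWrow : ∀ i, ∑ j, W i j = 1)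
  (hWt : ∀ i j, 0 ≤ Wt i j) (hWtrow : ∀ i, ∑ j, Wt i j = 1)
  (hδ : ∀ k i, 0 < δ k i ∧ δ k i ≤ 1) (hγ : ∀ k i, 0 < γ k i ∧ γ k i < 1)
  (hlam : ∀ k i, 0 ≤ lam k i) (hξ : ∀ k i, 0 < ξ k i)
  (hlx : ∀ k i, lam k i + ξ k i < 1)
  (hx0 : ∀ k i, x0 k i ∈ Set.Icc (0 : ℝ) 1)
  (hunit : ∀ k : Fin 2, IsUnit (1 - Matrix.diagonal (lam k) * Wt))
  (hMnn : ∀ (k : Fin 2) (i j : Fin n), 0 ≤ (1 - Matrix.diagonal (lam k) * Wt)⁻¹ i j)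
  (hxe : ∀ (k : Fin 2) (i : Fin n),
      0 < ((1 - Matrix.diagonal (lam k) * Wt)⁻¹ *ᵥ
        ((1 - Matrix.diagonal (lam k) - Matrix.diagonal (ξ k)) *ᵥ x0 k)) i)

include hW hWrow hWt hWtrow hδ hγ hlam hξ hlx hx0 hunit hMnn hxe in
/-- The candidate built from a fixed point of `st14Phi` is an equilibrium. -/
lemma st14_construct (af : Fin n → ℝ) (hafpos : ∀ i, 0 < af i)
    (hafix : ∀ i, st14Phi W Wt δ γ lam ξ x0 af i = af i) :
    IsAdoptionDiffusedEq W Wt β δ γ lam ξ x0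
      (fun _ => 0, st14as δ af, st14ds W Wt δ γ lam ξ x0 af, st14xs W Wt δ lam ξ x0 af) := by
  set as := st14as δ af with has_def
  set xs := st14xs W Wt δ lam ξ x0 af with hxs_def
  set ds := st14ds W Wt δ γ lam ξ x0 af with hds_def
  have hsub : ∀ k : Fin 2, 1 - (1 - k) = k := by decide
  have haspos : ∀ k i, 0 < as k i :=
    fun k i => mul_pos (div_pos (hδ 0 i).1 (hδ k i).1) (hafpos i)
  have has0 : as 0 = af := funext fun i => by
    show δ 0 i / δ 0 i * af i = af i
    rw [div_self (hδ 0 i).1.ne', one_mul]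
  have hxsX : ∀ k, xs k = st14X W Wt lam ξ x0 k (as k) := fun k => rfl
  have hxspos : ∀ k i, 0 < xs k i := fun k i =>
    st14X_pos W Wt lam ξ x0 hW hξ hMnn hxe k (fun j => (haspos k j).le) i
  have hdsval : ∀ k i, ds k i = δ k i * as k i / (γ (1 - k) i * xs (1 - k) i) :=
    fun k i => rfl
  have hdspos : ∀ k i, 0 < ds k i := fun k i => by
    rw [hdsval]
    exact div_pos (mul_pos (hδ k i).1 (haspos k i))
      (mul_pos (hγ (1 - k) i).1 (hxspos (1 - k) i))
  -- the master algebraic identity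
  have hADkey : ∀ i, af i * (1 + δ 0 i / δ 1 i + δ 0 i / (γ 1 i * xs 1 i)
      + δ 0 i / (γ 0 i * xs 0 i)) = 1 := by
    intro i
    have hX1e : xs 1 i = st14X W Wt lam ξ x0 1 (fun j => δ 0 j / δ 1 j * af j) i := rfl
    have hX0e : xs 0 i = st14X W Wt lam ξ x0 0 af i := by
      rw [hxsX 0, has0]
    have hD : st14D W Wt δ γ lam ξ x0 af i = 1 + δ 0 i / δ 1 i
        + δ 0 i / (γ 1 i * xs 1 i) + δ 0 i / (γ 0 i * xs 0 i) := by
      simp only [st14D]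
      rw [← hX1e, ← hX0e]
    have hDpos : 0 < st14D W Wt δ γ lam ξ x0 af i := by
      linarith [st14D_pos W Wt δ γ lam ξ x0 hW hδ hγ hξ hMnn hxe
        (fun j => (hafpos j).le) i]
    have h1 : af i * st14D W Wt δ γ lam ξ x0 af i = 1 := by
      rw [← hafix i, st14Phi_def, one_div, inv_mul_cancel₀ hDpos.ne']
    rw [← hD]
    exact h1
  have hnormi : ∀ i, as 0 i + ds 0 i + (as 1 i + ds 1 i) = 1 := by
    intro i
    have e10 : ds 0 i = δ 0 i * as 0 i / (γ 1 i * xs 1 i) := rfl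
    have e11 : ds 1 i = δ 1 i * as 1 i / (γ 0 i * xs 0 i) := rfl
    have eas0 : as 0 i = af i := by rw [has0]
    have eas1 : as 1 i = δ 0 i / δ 1 i * af i := rfl
    rw [e10, e11, eas0, eas1]
    have t1 : δ 1 i * (δ 0 i / δ 1 i * af i) = δ 0 i * af i := by
      have h1 := (hδ 1 i).1.ne'
      rw [← mul_assoc, mul_div_assoc', mul_comm (δ 1 i) (δ 0 i), mul_div_assoc, div_self h1, mul_one]
    rw [t1]
    have := hADkey i
    have hne1 : (γ 1 i * xs 1 i) ≠ 0 := (mul_pos (hγ 1 i).1 (hxspos 1 i)).ne'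
    have hne0 : (γ 0 i * xs 0 i) ≠ 0 := (mul_pos (hγ 0 i).1 (hxspos 0 i)).ne'
    field_simp at this ⊢
    linear_combination this
  have has_le1 : ∀ k i, as k i ≤ 1 := by
    intro k i
    have hn := hnormi i
    fin_cases k
    · have := hdspos 0 i; have := hdspos 1 i; have := haspos 1 i
      show as 0 i ≤ 1
      linarith
    · have := hdspos 0 i; have := hdspos 1 i; have := haspos 0 i
      show as 1 i ≤ 1
      linarith
  have hds_le1 : ∀ k i, ds k i ≤ 1 := by
    intro k i
    have hn := hnormi i
    fin_cases k
    · have := hdspos 1 i; have := haspos 0 i; have := haspos 1 i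
      show ds 0 i ≤ 1
      linarith
    · have := hdspos 0 i; have := haspos 0 i; have := haspos 1 i
      show ds 1 i ≤ 1
      linarith
  have hxs_le1 : ∀ k i, xs k i ≤ 1 := fun k i => by
    rw [hxsX k]
    exact st14X_le_one W Wt lam ξ x0 hW hWrow hMnn k hWt hWtrow hlam
      (fun k i => (hξ k i).le) hlx hx0 hunit
      (fun j => (haspos k j).le) (fun j => has_le1 k j) i
  -- algebraic identities for the equations
  have hδas : ∀ k i, δ k i * as k i = δ 0 i * af i := by
    intro k i
    show δ k i * (δ 0 i / δ k i * af i) = δ 0 i * af i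
    have := (hδ k i).1.ne'
    field_simp
  have hcancel : ∀ k i, γ (1 - k) i * xs (1 - k) i * ds k i = δ k i * as k i := by
    intro k i
    have hne : γ (1 - k) i * xs (1 - k) i ≠ 0 :=
      (mul_pos (hγ (1 - k) i).1 (hxspos (1 - k) i)).ne'
    rw [hdsval, mul_comm, div_mul_cancel₀ _ hne]
  refine ⟨?_, ?_, ?_, ?_, ?_, ?_, ?_, ?_⟩
  · intro i
    exact ⟨le_refl 0, zero_le_one⟩
  · intro k i
    exact ⟨⟨(haspos k i).le, has_le1 k i⟩, ⟨(hdspos k i).le, hds_le1 k i⟩,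
      ⟨(hxspos k i).le, hxs_le1 k i⟩⟩
  · intro i
    show (0 : ℝ) + ∑ k : Fin 2, (as k i + ds k i) = 1
    rw [Fin.sum_univ_two]
    linarith [hnormi i]
  · intro i
    exact zero_mul _
  · intro k i
    show β k i * xs k i * 0 * (∑ j, W i j * as k j) - δ k i * as k i
      + γ k i * xs k i * ds (1 - k) i = 0
    have hc := hcancel (1 - k) i
    rw [hsub k] at hc
    rw [hc, hδas (1 - k) i, hδas k i]
    ring
  · intro k i
    show -γ (1 - k) i * xs (1 - k) i * ds k i + δ k i * as k i = 0
    linear_combination - hcancel k i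
  · intro k i
    have h := (st14_E4_iff W Wt lam ξ x0 hunit k (xs k) (as k)).mp (hxsX k)
    exact h i
  · intro k i
    exact haspos k i

end

end St14Aux


/-- Theorem 5: under Assumption 1 the system admits a unique adoption-diffused
equilibrium `y*`; it satisfies `s* = 0`, `a^{[k]*}, d^{[k]*} > 0`,
`x^{[k]*} = (I − Λ^{[k]}W̃)⁻¹((I − Λ^{[k]} − Ξ^{[k]}) x^{[k]}(0) + Ξ^{[k]} W a^{[k]*})`
and `a_i^{[2]*} = (δ_i^{[1]}/δ_i^{[2]}) a_i^{[1]*}` for all `i`. -/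
theorem stmt14 {n : ℕ} (W Wt : Matrix (Fin n) (Fin n) ℝ)
    (β δ γ lam ξ x0 : Fin 2 → Fin n → ℝ)
    (hW : ∀ i j, 0 ≤ W i j) (hWrow : ∀ i, ∑ j, W i j = 1)
    (hWt : ∀ i j, 0 ≤ Wt i j) (hWtrow : ∀ i, ∑ j, Wt i j = 1)
    -- W irreducible: its directed graph is strongly connected
    (hirr : ∀ i j : Fin n, ∃ m : ℕ, 0 < m ∧ 0 < (W ^ m) i j)
    (hβnn : ∀ k i, 0 ≤ β k i) (hβ : ∀ i, 0 < β 0 i + β 1 i ∧ β 0 i + β 1 i < 1)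
    (hδ : ∀ k i, 0 < δ k i ∧ δ k i ≤ 1) (hγ : ∀ k i, 0 < γ k i ∧ γ k i < 1)
    (hlam : ∀ k i, 0 ≤ lam k i) (hξ : ∀ k i, 0 < ξ k i)
    (hlx : ∀ k i, lam k i + ξ k i < 1)
    (hx0 : ∀ k i, x0 k i ∈ Set.Icc (0 : ℝ) 1)
    (hunit : ∀ k : Fin 2, IsUnit (1 - Matrix.diagonal (lam k) * Wt))
    (hMnn : ∀ (k : Fin 2) (i j : Fin n), 0 ≤ (1 - Matrix.diagonal (lam k) * Wt)⁻¹ i j)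
    -- Assumption 1 (stubborn-community reachability): x_e^{[k]} > 0 entrywise
    (hxe : ∀ (k : Fin 2) (i : Fin n),
      0 < ((1 - Matrix.diagonal (lam k) * Wt)⁻¹ *ᵥ
        ((1 - Matrix.diagonal (lam k) - Matrix.diagonal (ξ k)) *ᵥ x0 k)) i) :
    (∃! y : (Fin n → ℝ) × (Fin 2 → Fin n → ℝ) × (Fin 2 → Fin n → ℝ) ×
        (Fin 2 → Fin n → ℝ), IsAdoptionDiffusedEq W Wt β δ γ lam ξ x0 y) ∧
    (∀ y, IsAdoptionDiffusedEq W Wt β δ γ lam ξ x0 y →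
      (∀ i, y.1 i = 0) ∧
      (∀ (k : Fin 2) (i : Fin n), 0 < y.2.2.1 k i) ∧
      (∀ k : Fin 2, y.2.2.2 k = (1 - Matrix.diagonal (lam k) * Wt)⁻¹ *ᵥ
        ((1 - Matrix.diagonal (lam k) - Matrix.diagonal (ξ k)) *ᵥ x0 k
          + Matrix.diagonal (ξ k) *ᵥ (W *ᵥ y.2.1 k))) ∧
      (∀ i : Fin n, y.2.1 1 i = (δ 0 i / δ 1 i) * y.2.1 0 i)) := by
  obtain ⟨af, hafpos, hafle, hafix⟩ :=
    st14_fix_exists W Wt δ γ lam ξ x0 hW hδ hγ hξ hMnn hxe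
  have hstar : IsAdoptionDiffusedEq W Wt β δ γ lam ξ x0
      ((fun _ => (0:ℝ)), st14as δ af, st14ds W Wt δ γ lam ξ x0 af,
        st14xs W Wt δ lam ξ x0 af) :=
    st14_construct W Wt δ γ lam ξ x0 β hW hWrow hWt hWtrow hδ hγ hlam hξ hlx hx0
      hunit hMnn hxe af hafpos hafix
  have huniq : ∀ y, IsAdoptionDiffusedEq W Wt β δ γ lam ξ x0 y →
      y = ((fun _ => (0:ℝ)), st14as δ af, st14ds W Wt δ γ lam ξ x0 af,
        st14xs W Wt δ lam ξ x0 af) := by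
    intro y hy
    have hapos : ∀ k i, 0 < y.2.1 k i := hy.2.2.2.2.2.2.2
    obtain ⟨hs0, hdpos, hxpos, hxeq, haey, hfixy, hdeqy⟩ :=
      st14_char W Wt δ γ lam ξ x0 β hW hWrow hβnn hβ hδ hγ hunit
        y.1 y.2.1 y.2.2.1 y.2.2.2 hy
    have ha0 : y.2.1 0 = af :=
      st14_fix_unique W Wt δ γ lam ξ x0 hW hδ hγ hξ hMnn hxe
        (fun i => hapos 0 i) hafpos hfixy hafix
    have h2 : y.2.1 = st14as δ af := by
      funext k i
      rw [haey k i, ha0]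
      rfl
    have h4 : y.2.2.2 = st14xs W Wt δ lam ξ x0 af := by
      funext k
      rw [hxeq k, h2]
      rfl
    have h3 : y.2.2.1 = st14ds W Wt δ γ lam ξ x0 af := by
      funext k i
      rw [hdeqy k i, h2, h4]
      rfl
    have h1 : y.1 = fun _ => (0:ℝ) := funext fun i => hs0 i
    calc y = (y.1, y.2.1, y.2.2.1, y.2.2.2) := rfl
    _ = ((fun _ => (0:ℝ)), st14as δ af, st14ds W Wt δ γ lam ξ x0 af,
        st14xs W Wt δ lam ξ x0 af) := by rw [h1, h2, h3, h4]
  constructor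
  · exact ⟨_, hstar, huniq⟩
  · intro y hy
    obtain ⟨hs0, hdpos, hxpos, hxeq, haey, hfixy, hdeqy⟩ :=
      st14_char W Wt δ γ lam ξ x0 β hW hWrow hβnn hβ hδ hγ hunit
        y.1 y.2.1 y.2.2.1 y.2.2.2 hy
    exact ⟨hs0, hdpos, fun k => hxeq k, fun i => haey 1 i⟩
end

section
/- Let y* be any equilibrium of the coupled adoption-opinion dynamics with strictly positive equilibrium opinions x^{[k]*} > 0 and with W irreducible. If s_i* = 0 for at least one node i, then s_j* = 0 for all nodes j. Equivalently, no partial-adoption equilibrium exists. -/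
/-- Proposition 6 (no partial-adoption equilibria): at any equilibrium with
strictly positive opinions and `W` irreducible, if `s_i* = 0` for at least one
node then `s_j* = 0` for all nodes. -/
theorem stmt15 {n : ℕ} (W : Matrix (Fin n) (Fin n) ℝ)
    (β δ γ x a d : Fin 2 → Fin n → ℝ) (s : Fin n → ℝ)
    (hW : ∀ i j, 0 ≤ W i j) (hWrow : ∀ i, ∑ j, W i j = 1)
    -- W irreducible: its directed graph is strongly connected
    (hirr : ∀ i j : Fin n, ∃ m : ℕ, 0 < m ∧ 0 < (W ^ m) i j)
    (hβx : ∀ (k : Fin 2) (j : Fin n), 0 < β k j * x k j)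
    (hδ : ∀ k i, 0 < δ k i ∧ δ k i ≤ 1) (hγ : ∀ k i, 0 < γ k i ∧ γ k i < 1)
    (hxpos : ∀ k i, 0 < x k i)
    (hsnn : ∀ i, 0 ≤ s i) (hann : ∀ k i, 0 ≤ a k i) (hdnn : ∀ k i, 0 ≤ d k i)
    -- equilibrium equation for the susceptibles
    (heqs : ∀ j : Fin n, 0 = - s j *
      (β 0 j * x 0 j * (∑ m, W j m * a 0 m) + β 1 j * x 1 j * (∑ m, W j m * a 1 m)))
    -- equilibrium equation for the adopters
    (heqa : ∀ (k : Fin 2) (i : Fin n),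
      0 = β k i * x k i * s i * (∑ j, W i j * a k j) - δ k i * a k i
        + γ k i * x k i * d (1 - k) i)
    -- equilibrium equation for the dissatisfied
    (heqd : ∀ (k : Fin 2) (i : Fin n),
      0 = - γ (1 - k) i * x (1 - k) i * d k i + δ k i * a k i)
    -- normalization
    (hnorm : ∀ i, s i + ∑ k, (a k i + d k i) = 1) :
    (∃ i, s i = 0) → ∀ j, s j = 0 := by
  -- nonnegativity of powers of W
  have hWpow : ∀ m : ℕ, ∀ i j, 0 ≤ (W ^ m) i j := by
    intro m
    induction m with
    | zero =>
      intro i j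
      simp [Matrix.one_apply]
      split <;> norm_num
    | succ m ih =>
      intro i j
      rw [pow_succ, Matrix.mul_apply]
      exact Finset.sum_nonneg fun q _ => mul_nonneg (ih i q) (hW q j)
  -- edge propagation: if s j > 0 and W j p > 0 then s p > 0
  have hedge : ∀ j p, 0 < s j → 0 < W j p → 0 < s p := by
    intro j p hsj hWjp
    -- the weighted neighbor sums vanish
    have hsum : ∀ k : Fin 2, ∑ m, W j m * a k m = 0 := by
      have hE := heqs j
      have hnn : ∀ k : Fin 2, 0 ≤ ∑ m, W j m * a k m := fun k =>
        Finset.sum_nonneg fun m _ => mul_nonneg (hW j m) (hann k m)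
      have h0 : 0 ≤ β 0 j * x 0 j * (∑ m, W j m * a 0 m) :=
        mul_nonneg (hβx 0 j).le (hnn 0)
      have h1 : 0 ≤ β 1 j * x 1 j * (∑ m, W j m * a 1 m) :=
        mul_nonneg (hβx 1 j).le (hnn 1)
      have hEz : β 0 j * x 0 j * (∑ m, W j m * a 0 m)
          + β 1 j * x 1 j * (∑ m, W j m * a 1 m) = 0 := by
        rcases mul_eq_zero.mp hE.symm with h | h
        · exact absurd h (by simpa using hsj.ne')
        · exact h
      have hz0 : β 0 j * x 0 j * (∑ m, W j m * a 0 m) = 0 := by linarith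
      have hz1 : β 1 j * x 1 j * (∑ m, W j m * a 1 m) = 0 := by linarith
      intro k
      fin_cases k
      · rcases mul_eq_zero.mp hz0 with h | h
        · exact absurd h (hβx 0 j).ne'
        · exact h
      · rcases mul_eq_zero.mp hz1 with h | h
        · exact absurd h (hβx 1 j).ne'
        · exact h
    -- hence a k p = 0
    have hap : ∀ k : Fin 2, a k p = 0 := by
      intro k
      have := (Finset.sum_eq_zero_iff_of_nonneg
        (fun m _ => mul_nonneg (hW j m) (hann k m))).mp (hsum k) p (Finset.mem_univ p)
      rcases mul_eq_zero.mp this with h | h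
      · exact absurd h hWjp.ne'
      · exact h
    -- hence d k p = 0
    have hdp : ∀ k : Fin 2, d k p = 0 := by
      intro k
      have hq := heqd k p
      rw [hap k] at hq
      have : γ (1 - k) p * x (1 - k) p * d k p = 0 := by linarith
      rcases mul_eq_zero.mp this with h | h
      · rcases mul_eq_zero.mp h with h' | h'
        · exact absurd h' (hγ (1 - k) p).1.ne'
        · exact absurd h' (hxpos (1 - k) p).ne'
      · exact h
    have hn := hnorm p
    rw [Fin.sum_univ_two, hap 0, hap 1, hdp 0, hdp 1] at hn
    linarith
  -- path propagation
  have hpath : ∀ m : ℕ, ∀ j p, 0 < (W ^ m) j p → 0 < s j → 0 < s p := by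
    intro m
    induction m with
    | zero =>
      intro j p h hs
      rw [pow_zero, Matrix.one_apply] at h
      by_cases hjp : j = p
      · exact hjp ▸ hs
      · simp [hjp] at h
    | succ m ih =>
      intro j p h hs
      rw [pow_succ, Matrix.mul_apply] at h
      obtain ⟨q, hq⟩ : ∃ q, 0 < (W ^ m) j q * W q p := by
        by_contra hc
        push_neg at hc
        have : ∑ q, (W ^ m) j q * W q p = 0 :=
          Finset.sum_eq_zero fun q _ =>
            le_antisymm (hc q) (mul_nonneg (hWpow m j q) (hW q p))
        linarith
      have h1 : 0 < (W ^ m) j q := by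
        rcases (hWpow m j q).lt_or_eq with h' | h'
        · exact h'
        · rw [← h'] at hq; simp at hq
      have h2 : 0 < W q p := by
        rcases (hW q p).lt_or_eq with h' | h'
        · exact h'
        · rw [← h'] at hq; simp at hq
      exact hedge q p (ih j q h1 hs) h2
  rintro ⟨i, hi⟩ j
  by_contra hj
  have hsj : 0 < s j := (hsnn j).lt_of_ne (Ne.symm hj)
  obtain ⟨m, _, hm⟩ := hirr j i
  exact absurd (hpath m j i hm hsj) (by simp [hi])
end
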